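/- arXiv:2511.15696 — 7 statements merged into one kernel-verified Lean document; each statement's English description precedes it below -/
import Mathlib

section
/- Let V be a nonzero finite-dimensional real vector space and let H be a subgroup of GL(V) that is connected in the norm topology and acts irreducibly on V. Then for all linear subspaces W, W' ⊆ V there exists h ∈ H such that dim((h·W) ∩ W') · dim V ≤ dim W · dim W'. -/
set_option linter.unusedSectionVars false

open MvPolynomial Module

namespace Subcrit

variable {σ : Type*} [Finite σ]

noncomputable local instance : DecidableEq (Set (σ → ℝ)) := Classical.decEq _

local notation "Pt" σ => (σ → ℝ)

local notation "zeroLocus" => MvPolynomial.zeroLocus ℝ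

local notation "vanishingIdeal" => MvPolynomial.vanishingIdeal ℝ

/-- algebraically closed subset of ℝ^σ -/
def acl (X : Set (σ → ℝ)) : Prop := zeroLocus (vanishingIdeal X) = X

/-- irreducible set (w.r.t. algebraic sets) -/
def irr (X : Set (σ → ℝ)) : Prop :=
  X.Nonempty ∧ ∀ Y Z : Set (σ → ℝ), acl Y → acl Z → X ⊆ Y ∪ Z → X ⊆ Y ∨ X ⊆ Z

theorem acl_zeroLocus (I : Ideal (MvPolynomial σ ℝ)) : acl (zeroLocus I) :=
  le_antisymm (zeroLocus_anti_mono (le_vanishingIdeal_zeroLocus I))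
    (zeroLocus_vanishingIdeal_le _)

theorem acl.eq (X : Set (σ → ℝ)) (h : acl X) : zeroLocus (vanishingIdeal X) = X := h

theorem exists_poly_of_not_mem {X : Set (σ → ℝ)} (hX : acl X) {x : σ → ℝ} (hx : x ∉ X) :
    ∃ p ∈ vanishingIdeal X, eval x p ≠ 0 := by
  by_contra hcon
  push_neg at hcon
  exact hx (hX ▸ (fun p hp => not_not.mp (fun h => h (hcon p hp)) : x ∈ zeroLocus (vanishingIdeal X)))

theorem acl_empty : acl (∅ : Set (σ → ℝ)) := by
  have : (vanishingIdeal (∅ : Set (σ → ℝ))) = ⊤ := vanishingIdeal_empty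
  rw [acl, this, zeroLocus_top]; rfl

theorem acl_inter {X Y : Set (σ → ℝ)} (hX : acl X) (hY : acl Y) : acl (X ∩ Y) := by
  refine le_antisymm (fun x hx => ?_) (zeroLocus_vanishingIdeal_le _)
  constructor
  · rw [← hX]
    exact fun p hp => hx p (vanishingIdeal_anti_mono Set.inter_subset_left hp)
  · rw [← hY]
    exact fun p hp => hx p (vanishingIdeal_anti_mono Set.inter_subset_right hp)

theorem acl_union {X Y : Set (σ → ℝ)} (hX : acl X) (hY : acl Y) : acl (X ∪ Y) := by
  refine le_antisymm (fun x hx => ?_) (zeroLocus_vanishingIdeal_le _)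
  by_cases hxX : x ∈ X
  · exact Or.inl hxX
  · obtain ⟨p, hp, hpx⟩ := exists_poly_of_not_mem hX hxX
    right
    rw [← hY]
    intro q hq
    have hpq : p * q ∈ vanishingIdeal (X ∪ Y) := by
      intro y hy
      rcases hy with hy | hy
      · rw [map_mul, hp y hy, zero_mul]
      · rw [map_mul, hq y hy, mul_zero]
    have := hx _ hpq
    rw [map_mul] at this
    rcases mul_eq_zero.mp this with h | h
    · exact absurd h hpx
    · exact h

theorem acl_sUnion (𝒞 : Finset (Set (σ → ℝ))) (h : ∀ C ∈ 𝒞, acl C) :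
    acl (⋃₀ (↑𝒞 : Set (Set (σ → ℝ)))) := by
  classical
  induction 𝒞 using Finset.induction_on with
  | empty => simpa using acl_empty
  | @insert C s hCs ih =>
    rw [Finset.coe_insert, Set.sUnion_insert]
    exact acl_union (h C (Finset.mem_insert_self _ _))
      (ih fun D hD => h D (Finset.mem_insert_of_mem hD))

theorem vanishingIdeal_strict_anti {X Y : Set (σ → ℝ)} (hX : acl X) (hY : acl Y)
    (h : X ⊂ Y) : vanishingIdeal Y < vanishingIdeal X := by
  refine lt_of_le_of_ne (vanishingIdeal_anti_mono h.le) (fun he => ?_)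
  have : X = Y := by rw [← hX, ← hY, he]
  exact h.ne this

/-- every algebraic set decomposes into finitely many irreducible algebraic sets -/
theorem decomp (X : Set (σ → ℝ)) (hX : acl X) :
    ∃ 𝒞 : Finset (Set (σ → ℝ)), (∀ C ∈ 𝒞, acl C ∧ irr C) ∧ ⋃₀ (↑𝒞 : Set (Set (σ → ℝ))) = X := by
  classical
  refine (wellFounded_gt.induction (C := fun I : Ideal (MvPolynomial σ ℝ) =>
      ∀ X : Set (σ → ℝ), acl X → vanishingIdeal X = I →
      ∃ 𝒞 : Finset (Set (σ → ℝ)), (∀ C ∈ 𝒞, acl C ∧ irr C) ∧ ⋃₀ (↑𝒞 : Set (Set (σ → ℝ))) = X)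
      (vanishingIdeal X) ?_) X hX rfl
  clear hX X
  intro I ih X hX hI
  subst hI
  rcases Set.eq_empty_or_nonempty X with rfl | hne
  · exact ⟨∅, by simp, by simp⟩
  by_cases hirr : irr X
  · exact ⟨{X}, by simp [hX, hirr], by simp⟩
  · rw [irr, not_and_or] at hirr
    rcases hirr with h | h
    · exact absurd hne h
    push_neg at h
    obtain ⟨Y, Z, hY, hZ, hXYZ, hXY, hXZ⟩ := h
    set Y' := X ∩ Y with hY'def
    set Z' := X ∩ Z with hZ'def
    have hY' : acl Y' := acl_inter hX hY
    have hZ' : acl Z' := acl_inter hX hZ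
    have hYX : Y' ⊂ X := ⟨Set.inter_subset_left, fun hs => hXY (fun x hx => (hs hx).2)⟩
    have hZX : Z' ⊂ X := ⟨Set.inter_subset_left, fun hs => hXZ (fun x hx => (hs hx).2)⟩
    obtain ⟨𝒞₁, h𝒞₁, hU₁⟩ := ih (vanishingIdeal Y') (vanishingIdeal_strict_anti hY' hX hYX) Y' hY' rfl
    obtain ⟨𝒞₂, h𝒞₂, hU₂⟩ := ih (vanishingIdeal Z') (vanishingIdeal_strict_anti hZ' hX hZX) Z' hZ' rfl
    refine ⟨𝒞₁ ∪ 𝒞₂, ?_, ?_⟩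
    · intro C hC
      rcases Finset.mem_union.mp hC with h | h
      exacts [h𝒞₁ C h, h𝒞₂ C h]
    · rw [Finset.coe_union, Set.sUnion_union, hU₁, hU₂]
      apply Set.eq_of_subset_of_subset (Set.union_subset hYX.le hZX.le)
      intro x hx
      rcases hXYZ hx with h | h
      · exact Or.inl ⟨hx, h⟩
      · exact Or.inr ⟨hx, h⟩

theorem irr_subset_mem {𝒞 : Finset (Set (σ → ℝ))} (hacl : ∀ C ∈ 𝒞, acl C)
    {D : Set (σ → ℝ)} (hD : irr D) (hsub : D ⊆ ⋃₀ (↑𝒞 : Set (Set (σ → ℝ)))) :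
    ∃ C ∈ 𝒞, D ⊆ C := by
  classical
  induction 𝒞 using Finset.induction_on with
  | empty =>
    obtain ⟨x, hx⟩ := hD.1
    simp only [Finset.coe_empty, Set.sUnion_empty] at hsub
    exact absurd (hsub hx) (Set.notMem_empty x)
  | @insert C s hCs ih =>
    have hsub' : D ⊆ C ∪ ⋃₀ (↑s : Set (Set (σ → ℝ))) := by
      rwa [Finset.coe_insert, Set.sUnion_insert] at hsub
    rcases hD.2 C (⋃₀ (↑s : Set (Set (σ → ℝ)))) (hacl C (Finset.mem_insert_self _ _))
        (acl_sUnion s fun E hE => hacl E (Finset.mem_insert_of_mem hE)) hsub' with h | h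
    · exact ⟨C, Finset.mem_insert_self _ _, h⟩
    · obtain ⟨E, hE, hDE⟩ := ih (fun E hE => hacl E (Finset.mem_insert_of_mem hE)) h
      exact ⟨E, Finset.mem_insert_of_mem hE, hDE⟩

theorem refine_cover (𝒞 : Finset (Set (σ → ℝ))) :
    ∃ 𝒟 ⊆ 𝒞, ⋃₀ (↑𝒟 : Set (Set (σ → ℝ))) = ⋃₀ (↑𝒞 : Set (Set (σ → ℝ))) ∧
      ∀ C ∈ 𝒟, ¬ C ⊆ ⋃₀ (↑(𝒟.erase C) : Set (Set (σ → ℝ))) := by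
  classical
  induction 𝒞 using Finset.strongInduction with
  | _ 𝒞 ih =>
  by_cases h : ∃ C ∈ 𝒞, ⋃₀ (↑(𝒞.erase C) : Set (Set (σ → ℝ))) = ⋃₀ (↑𝒞 : Set (Set (σ → ℝ)))
  · obtain ⟨C, hC, hCe⟩ := h
    obtain ⟨𝒟, h1, h2, h3⟩ := ih (𝒞.erase C) (Finset.erase_ssubset hC)
    exact ⟨𝒟, h1.trans (Finset.erase_subset _ _), h2.trans hCe, h3⟩
  · push_neg at h
    refine ⟨𝒞, le_refl _, rfl, fun C hC hsub => ?_⟩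
    refine h C hC (Set.eq_of_subset_of_subset ?_ ?_)
    · exact Set.sUnion_subset_sUnion (by exact_mod_cast Finset.coe_subset.mpr (Finset.erase_subset _ _))
    · intro x hx
      obtain ⟨E, hE, hxE⟩ := hx
      rcases eq_or_ne E C with rfl | hne
      · exact hsub hxE
      · exact ⟨E, by
          simp only [Finset.coe_erase, Set.mem_diff, Set.mem_singleton_iff]
          exact ⟨hE, hne⟩, hxE⟩

theorem not_subset_of_irredundant {𝒟 : Finset (Set (σ → ℝ))}
    (h3 : ∀ C ∈ 𝒟, ¬ C ⊆ ⋃₀ (↑(𝒟.erase C) : Set (Set (σ → ℝ))))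
    {C C' : Set (σ → ℝ)} (hC : C ∈ 𝒟) (hC' : C' ∈ 𝒟) (hne : C ≠ C') (hsub : C ⊆ C') :
    False := by
  refine h3 C hC (fun x hx => ⟨C', ?_, hsub hx⟩)
  simp only [Finset.coe_erase, Set.mem_diff, Set.mem_singleton_iff]
  exact ⟨hC', fun he => hne he.symm⟩

section Group

variable {n : ℕ}

/-- matrix multiplication on points -/
def pmul (x y : (Fin n × Fin n) → ℝ) : (Fin n × Fin n) → ℝ :=
  fun ij => ∑ k : Fin n, x (ij.1, k) * y (k, ij.2)

def pone : (Fin n × Fin n) → ℝ := fun ij => if ij.1 = ij.2 then 1 else 0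

theorem pmul_assoc (x y z : (Fin n × Fin n) → ℝ) : pmul (pmul x y) z = pmul x (pmul y z) := by
  funext ij
  unfold pmul
  simp only [Finset.sum_mul, Finset.mul_sum]
  rw [Finset.sum_comm]
  exact Finset.sum_congr rfl fun k _ => Finset.sum_congr rfl fun l _ => by ring

theorem pone_mul (x : (Fin n × Fin n) → ℝ) : pmul pone x = x := by
  funext ij
  simp [pmul, pone, ite_mul]

theorem pmul_one (x : (Fin n × Fin n) → ℝ) : pmul x pone = x := by
  funext ij
  simp [pmul, pone, mul_ite]

noncomputable def psubst (t : (Fin n × Fin n) → ℝ) :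
    MvPolynomial (Fin n × Fin n) ℝ →+* MvPolynomial (Fin n × Fin n) ℝ :=
  eval₂Hom MvPolynomial.C
    (fun ij => ∑ k : Fin n, MvPolynomial.C (t (ij.1, k)) * MvPolynomial.X (k, ij.2))

theorem eval_psubst (t x : (Fin n × Fin n) → ℝ) (p : MvPolynomial (Fin n × Fin n) ℝ) :
    eval x (psubst t p) = eval (pmul t x) p := by
  have h : (eval x).comp (psubst t) = eval (pmul t x) := by
    apply ringHom_ext
    · intro r; simp [psubst]
    · intro ij; simp [psubst, pmul]
  exact RingHom.congr_fun h p

theorem preimage_zeroLocus_pmul (t : (Fin n × Fin n) → ℝ)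
    (I : Ideal (MvPolynomial (Fin n × Fin n) ℝ)) :
    (fun x => pmul t x) ⁻¹' zeroLocus I = zeroLocus (Ideal.map (psubst t) I) := by
  ext x
  simp only [Set.mem_preimage, mem_zeroLocus_iff]
  constructor
  · intro h q hq
    have hle : Ideal.map (psubst t) I ≤ RingHom.ker (eval x) := by
      refine Ideal.map_le_iff_le_comap.mpr (fun p hp => ?_)
      simp only [Ideal.mem_comap, RingHom.mem_ker, eval_psubst]
      exact h p hp
    exact hle hq
  · intro h p hp
    rw [aeval_eq_eval, ← eval_psubst]
    exact h _ (Ideal.mem_map_of_mem _ hp)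

theorem acl_preimage_pmul {Y : Set ((Fin n × Fin n) → ℝ)} (hY : acl Y)
    (t : (Fin n × Fin n) → ℝ) : acl ((fun x => pmul t x) ⁻¹' Y) := by
  have h : (fun x => pmul t x) ⁻¹' Y = zeroLocus (Ideal.map (psubst t) (vanishingIdeal Y)) := by
    rw [← preimage_zeroLocus_pmul, hY]
  rw [h]
  exact acl_zeroLocus _

theorem image_eq_preimage_pmul {t t' : (Fin n × Fin n) → ℝ}
    (h1 : pmul t t' = pone) (h2 : pmul t' t = pone) (Y : Set ((Fin n × Fin n) → ℝ)) :
    (fun x => pmul t x) '' Y = (fun x => pmul t' x) ⁻¹' Y := by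
  ext x
  constructor
  · rintro ⟨y, hy, rfl⟩
    have : pmul t' (pmul t y) = y := by rw [← pmul_assoc, h2, pone_mul]
    simpa [Set.mem_preimage, this] using hy
  · intro hx
    exact ⟨pmul t' x, hx, by show pmul t (pmul t' x) = x; rw [← pmul_assoc, h1, pone_mul]⟩

theorem acl_image_pmul {t t' : (Fin n × Fin n) → ℝ}
    (h1 : pmul t t' = pone) (h2 : pmul t' t = pone) {Y : Set ((Fin n × Fin n) → ℝ)}
    (hY : acl Y) : acl ((fun x => pmul t x) '' Y) := by
  rw [image_eq_preimage_pmul h1 h2]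
  exact acl_preimage_pmul hY t'

theorem irr_image_pmul {C : Set ((Fin n × Fin n) → ℝ)} (hC : irr C)
    (t : (Fin n × Fin n) → ℝ) : irr ((fun x => pmul t x) '' C) := by
  constructor
  · exact hC.1.image _
  · intro Y Z hY hZ hsub
    have hC' : C ⊆ ((fun x => pmul t x) ⁻¹' Y) ∪ ((fun x => pmul t x) ⁻¹' Z) :=
      fun x hx => hsub ⟨x, hx, rfl⟩
    rcases hC.2 _ _ (acl_preimage_pmul hY t) (acl_preimage_pmul hZ t) hC' with h | h
    · left; rintro _ ⟨y, hy, rfl⟩; exact h hy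
    · right; rintro _ ⟨y, hy, rfl⟩; exact h hy

theorem cl_min {T A : Set ((Fin n × Fin n) → ℝ)} (hTA : T ⊆ A) (hA : acl A) :
    zeroLocus (vanishingIdeal T) ⊆ A :=
  le_of_le_of_eq (zeroLocus_anti_mono (vanishingIdeal_anti_mono hTA)) hA

theorem isClosed_zeroLocus (I : Ideal (MvPolynomial (Fin n × Fin n) ℝ)) :
    IsClosed (zeroLocus I) := by
  have h : zeroLocus I = ⋂ p ∈ (I : Set (MvPolynomial (Fin n × Fin n) ℝ)),
      {x : (Fin n × Fin n) → ℝ | eval x p = 0} := by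
    ext x; simp [mem_zeroLocus_iff]
  rw [h]
  exact isClosed_biInter fun p _ => isClosed_eq (MvPolynomial.continuous_eval p) continuous_const

theorem acl_isClosed {A : Set ((Fin n × Fin n) → ℝ)} (hA : acl A) : IsClosed A :=
  hA ▸ isClosed_zeroLocus _

end Group

/-- KEY: in a norm-connected matrix group, two polynomials that each do not vanish
identically have a common non-vanishing point. -/
theorem exists_both_ne {n : ℕ} {T : Set ((Fin n × Fin n) → ℝ)}
    (hone : pone ∈ T)
    (hmulT : ∀ x ∈ T, ∀ y ∈ T, pmul x y ∈ T)
    (hinvT : ∀ x ∈ T, ∃ y ∈ T, pmul x y = pone ∧ pmul y x = pone)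
    (hconn : IsPreconnected T)
    {p q : MvPolynomial (Fin n × Fin n) ℝ}
    (hp : ∃ a ∈ T, eval a p ≠ 0) (hq : ∃ b ∈ T, eval b q ≠ 0) :
    ∃ t ∈ T, eval t p ≠ 0 ∧ eval t q ≠ 0 := by
  classical
  by_contra hcon
  push_neg at hcon
  obtain ⟨a, haT, hap⟩ := hp
  obtain ⟨b, hbT, hbq⟩ := hq
  -- T is contained in the union of the two zero loci
  have hTzl : T ⊆ zeroLocus (Ideal.span {p}) ∪ zeroLocus (Ideal.span {q}) := by
    intro t ht
    rcases em (eval t p = 0) with h | h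
    · left
      intro r hr
      obtain ⟨c, rfl⟩ := Ideal.mem_span_singleton'.mp hr
      rw [map_mul, aeval_eq_eval, h, mul_zero]
    · right
      intro r hr
      obtain ⟨c, rfl⟩ := Ideal.mem_span_singleton'.mp hr
      rw [map_mul, aeval_eq_eval, hcon t ht h, mul_zero]
  -- the algebraic closure X of T and its irredundant decomposition
  set X := zeroLocus (vanishingIdeal T) with hXdef
  have hXacl : acl X := acl_zeroLocus _
  have hTX : T ⊆ X := zeroLocus_vanishingIdeal_le T
  obtain ⟨𝒞₀, h𝒞₀, hU₀⟩ := decomp X hXacl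
  obtain ⟨𝒟, h𝒟sub, h𝒟U, h𝒟irred⟩ := refine_cover 𝒞₀
  have h𝒟 : ∀ C ∈ 𝒟, acl C ∧ irr C := fun C hC => h𝒞₀ C (h𝒟sub hC)
  have h𝒟X : ⋃₀ (↑𝒟 : Set (Set ((Fin n × Fin n) → ℝ))) = X := h𝒟U.trans hU₀
  -- X is invariant under left multiplication by elements of T
  have hXinv : ∀ t ∈ T, (fun x => pmul t x) '' X = X := by
    intro t ht
    obtain ⟨t', ht'T, h1, h2⟩ := hinvT t ht
    have hTim : (fun x => pmul t x) '' T = T := by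
      apply Set.eq_of_subset_of_subset
      · rintro _ ⟨y, hy, rfl⟩; exact hmulT t ht y hy
      · intro y hy
        refine ⟨pmul t' y, hmulT t' ht'T y hy, ?_⟩
        show pmul t (pmul t' y) = y
        rw [← pmul_assoc, h1, pone_mul]
    have himacl : acl ((fun x => pmul t x) '' X) := acl_image_pmul h1 h2 hXacl
    have h1' : X ⊆ (fun x => pmul t x) '' X := by
      refine cl_min ?_ himacl
      rw [← hTim]
      exact Set.image_mono hTX
    have h2' : X ⊆ (fun x => pmul t' x) '' X := by
      have hTim' : (fun x => pmul t' x) '' T = T := by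
        apply Set.eq_of_subset_of_subset
        · rintro _ ⟨y, hy, rfl⟩; exact hmulT t' ht'T y hy
        · intro y hy
          refine ⟨pmul t y, hmulT t ht y hy, ?_⟩
          show pmul t' (pmul t y) = y
          rw [← pmul_assoc, h2, pone_mul]
      refine cl_min ?_ (acl_image_pmul h2 h1 hXacl)
      rw [← hTim']
      exact Set.image_mono hTX
    apply Set.eq_of_subset_of_subset _ h1'
    intro y hy
    obtain ⟨z, hz, rfl⟩ := hy
    obtain ⟨w, hw, rfl⟩ := h2' hz
    show pmul t (pmul t' w) ∈ X
    have : pmul t (pmul t' w) = w := by rw [← pmul_assoc, h1, pone_mul]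
    rw [this]; exact hw
  -- each translate of a component is contained in (in fact equal to) a unique component
  have hcomp_sub : ∀ t ∈ T, ∀ C ∈ 𝒟, ∃ D ∈ 𝒟, (fun x => pmul t x) '' C ⊆ D := by
    intro t ht C hC
    refine irr_subset_mem (fun D hD => (h𝒟 D hD).1) (irr_image_pmul (h𝒟 C hC).2 t) ?_
    rw [h𝒟X, ← hXinv t ht]
    apply Set.image_mono
    rw [← h𝒟X]
    exact fun x hx => ⟨C, hC, hx⟩
  have hmem_eq : ∀ C ∈ 𝒟, ∀ D ∈ 𝒟, C ⊆ D → C = D := by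
    intro C hC D hD hsub
    by_contra hne
    exact not_subset_of_irredundant h𝒟irred hC hD hne hsub
  have hcomp_eq : ∀ t ∈ T, ∀ C ∈ 𝒟, ∀ D ∈ 𝒟, (fun x => pmul t x) '' C ⊆ D →
      (fun x => pmul t x) '' C = D := by
    intro t ht C hC D hD hsub
    obtain ⟨t', ht'T, h1, h2⟩ := hinvT t ht
    obtain ⟨E, hE, hE'⟩ := hcomp_sub t' ht'T D hD
    have hCE : C ⊆ E := by
      intro x hx
      have : pmul t' (pmul t x) = x := by rw [← pmul_assoc, h2, pone_mul]
      exact hE' ⟨pmul t x, hsub ⟨x, hx, rfl⟩, this⟩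
    have hCeqE : C = E := hmem_eq C hC E hE hCE
    apply Set.eq_of_subset_of_subset hsub
    intro y hy
    have h1y : pmul t' y ∈ C := by rw [hCeqE]; exact hE' ⟨y, hy, rfl⟩
    have : pmul t (pmul t' y) = y := by rw [← pmul_assoc, h1, pone_mul]
    exact ⟨pmul t' y, h1y, this⟩
  -- the fiber sets
  let ι := {C : Set ((Fin n × Fin n) → ℝ) // C ∈ 𝒟}
  let K : (ι → ι) → Set ((Fin n × Fin n) → ℝ) := fun f =>
    {t | ∀ C : ι, ∀ x ∈ (C : Set ((Fin n × Fin n) → ℝ)), pmul t x ∈ (f C : Set ((Fin n × Fin n) → ℝ))}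
  have hKclosed : ∀ f, IsClosed (K f) := by
    intro f
    have : K f = ⋂ C : ι, ⋂ x ∈ (C : Set ((Fin n × Fin n) → ℝ)),
        (fun t => pmul t x) ⁻¹' (f C : Set ((Fin n × Fin n) → ℝ)) := by
      ext t; simp [K, Set.mem_iInter]
    rw [this]
    refine isClosed_iInter fun C => isClosed_biInter fun x _ => ?_
    refine IsClosed.preimage ?_ (acl_isClosed (h𝒟 _ (f C).2).1)
    refine continuous_pi fun ij => ?_
    exact continuous_finset_sum _ fun k _ => ((continuous_apply _).mul continuous_const)
  have hKmem : ∀ f, ∀ t, t ∈ K f ↔ ∀ C : ι, (fun x => pmul t x) '' (C : Set ((Fin n × Fin n) → ℝ))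
      ⊆ (f C : Set ((Fin n × Fin n) → ℝ)) := by
    intro f t
    constructor
    · rintro h C _ ⟨x, hx, rfl⟩; exact h C x hx
    · intro h C x hx; exact h C ⟨x, hx, rfl⟩
  -- each t ∈ T lies in some fiber
  have hcover : ∀ t ∈ T, ∃ f : ι → ι, t ∈ K f := by
    intro t ht
    have h1 : ∀ C : ι, ∃ D : ι, (fun x => pmul t x) '' (C : Set ((Fin n × Fin n) → ℝ))
        ⊆ (D : Set ((Fin n × Fin n) → ℝ)) := by
      intro C
      obtain ⟨D, hD, hDs⟩ := hcomp_sub t ht C C.2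
      exact ⟨⟨D, hD⟩, hDs⟩
    choose f hf using h1
    exact ⟨f, (hKmem f t).mpr hf⟩
  -- fibers are disjoint on T
  have hdisj : ∀ t ∈ T, ∀ f g, t ∈ K f → t ∈ K g → f = g := by
    intro t ht f g hfm hgm
    funext C
    have h1 := hcomp_eq t ht C C.2 (f C) (f C).2 ((hKmem f t).mp hfm C)
    have h2 := hcomp_eq t ht C C.2 (g C) (g C).2 ((hKmem g t).mp hgm C)
    exact Subtype.ext (h1 ▸ h2)
  -- the identity lies in the fiber of the identity map
  have hone_id : pone ∈ K id := by
    intro C x hx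
    rw [pone_mul]
    exact hx
  -- by connectedness, T is contained in the identity fiber
  have hTid : ∀ t ∈ T, t ∈ K id := by
    by_contra hcontra
    push_neg at hcontra
    obtain ⟨t₀, ht₀T, ht₀⟩ := hcontra
    set Krest := ⋃ f : {f : ι → ι // f ≠ id}, K f.1 with hKrest
    have hKrclosed : IsClosed Krest := isClosed_iUnion_of_finite fun f => hKclosed f.1
    set U₁ := (Krest)ᶜ with hU₁
    set U₂ := (K id)ᶜ with hU₂
    have hcov : T ⊆ U₁ ∪ U₂ := by
      intro t ht
      rcases em (t ∈ Krest) with h | h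
      · right
        intro hid
        obtain ⟨s, hs⟩ := Set.mem_iUnion.mp h
        exact s.2 (hdisj t ht s.1 id hs hid)
      · exact Or.inl h
    have hdisj2 : T ∩ (U₁ ∩ U₂) = ∅ := by
      apply Set.eq_empty_iff_forall_notMem.mpr
      rintro t ⟨ht, h1, h2⟩
      obtain ⟨f, hf⟩ := hcover t ht
      rcases eq_or_ne f id with rfl | hne
      · exact h2 hf
      · exact h1 (Set.mem_iUnion.mpr ⟨⟨f, hne⟩, hf⟩)
    have hne1 : (T ∩ U₁).Nonempty := by
      refine ⟨pone, hone, ?_⟩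
      intro h
      obtain ⟨s, hs⟩ := Set.mem_iUnion.mp h
      exact s.2 (hdisj pone hone s.1 id hs hone_id)
    have hne2 : (T ∩ U₂).Nonempty := ⟨t₀, ht₀T, ht₀⟩
    obtain ⟨x, hx⟩ := hconn U₁ U₂ hKrclosed.isOpen_compl (hKclosed id).isOpen_compl hcov hne1 hne2
    rw [Set.eq_empty_iff_forall_notMem] at hdisj2
    exact hdisj2 x ⟨hx.1, hx.2⟩
  -- hence every element of T fixes every component
  have hfix : ∀ t ∈ T, ∀ C ∈ 𝒟, (fun x => pmul t x) '' C = C := by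
    intro t ht C hC
    exact hcomp_eq t ht C hC C hC ((hKmem id t).mp (hTid t ht) ⟨C, hC⟩)
  -- 𝒟 is nonempty
  have h𝒟ne : ∃ C, C ∈ 𝒟 := by
    have : pone ∈ X := hTX hone
    rw [← h𝒟X] at this
    obtain ⟨C, hC, _⟩ := this
    exact ⟨C, hC⟩
  obtain ⟨C₀, hC₀⟩ := h𝒟ne
  -- T is not contained in the union of the other components
  have hex : ∃ t₁ ∈ T, t₁ ∉ ⋃₀ (↑(𝒟.erase C₀) : Set (Set ((Fin n × Fin n) → ℝ))) := by
    by_contra hcontra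
    push_neg at hcontra
    have hsub : X ⊆ ⋃₀ (↑(𝒟.erase C₀) : Set (Set ((Fin n × Fin n) → ℝ))) :=
      cl_min hcontra (acl_sUnion _ fun C hC => (h𝒟 C (Finset.mem_of_mem_erase hC)).1)
    refine h𝒟irred C₀ hC₀ (fun x hx => hsub ?_)
    rw [← h𝒟X]
    exact ⟨C₀, hC₀, hx⟩
  obtain ⟨t₁, ht₁T, ht₁⟩ := hex
  have ht₁C₀ : t₁ ∈ C₀ := by
    have : t₁ ∈ X := hTX ht₁T
    rw [← h𝒟X] at this
    obtain ⟨C, hC, hmem⟩ := this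
    rcases eq_or_ne C C₀ with rfl | hne
    · exact hmem
    · exact absurd ⟨C, by
        simp only [Finset.coe_erase, Set.mem_diff, Set.mem_singleton_iff]
        exact ⟨hC, hne⟩, hmem⟩ ht₁
  -- T ⊆ C₀
  have hTC₀ : T ⊆ C₀ := by
    intro t ht
    obtain ⟨t₁', ht₁'T, h1, h2⟩ := hinvT t₁ ht₁T
    have hmem : pmul t t₁' ∈ T := hmulT t ht t₁' ht₁'T
    have : pmul (pmul t t₁') t₁ = t := by
      rw [pmul_assoc, h2, pmul_one]
    rw [← this]
    rw [← hfix (pmul t t₁') hmem C₀ hC₀]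
    exact ⟨t₁, ht₁C₀, rfl⟩
  -- C₀ is irreducible and contained in the union of the two loci: contradiction
  have hC₀sub : C₀ ⊆ zeroLocus (Ideal.span {p}) ∪ zeroLocus (Ideal.span {q}) := by
    have hXsub : X ⊆ zeroLocus (Ideal.span {p}) ∪ zeroLocus (Ideal.span {q}) :=
      cl_min hTzl (acl_union (acl_zeroLocus _) (acl_zeroLocus _))
    intro x hx
    apply hXsub
    rw [← h𝒟X]
    exact ⟨C₀, hC₀, hx⟩
  rcases (h𝒟 C₀ hC₀).2.2 _ _ (acl_zeroLocus _) (acl_zeroLocus _) hC₀sub with h | h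
  · exact hap (h (hTC₀ haT) p (Ideal.mem_span_singleton_self p))
  · exact hbq (h (hTC₀ hbT) q (Ideal.mem_span_singleton_self q))

section LinAlg

variable {V : Type*} [NormedAddCommGroup V] [NormedSpace ℝ V] [FiniteDimensional ℝ V]

theorem finrank_inf_add_finrank_range (g : V →ₗ[ℝ] V) (hg : Function.Injective g)
    (W M : Submodule ℝ V) :
    finrank ℝ ↥(W.map g ⊓ M) + finrank ℝ ↥(LinearMap.range (M.mkQ ∘ₗ (g ∘ₗ W.subtype)))
      = finrank ℝ ↥W := by
  set f := M.mkQ ∘ₗ (g ∘ₗ W.subtype) with hf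
  have hinj : Function.Injective (g ∘ₗ W.subtype) := by
    rw [LinearMap.coe_comp]
    exact hg.comp (Submodule.injective_subtype W)
  have hker : LinearMap.ker f = Submodule.comap (g ∘ₗ W.subtype) M := by
    rw [hf, LinearMap.ker_comp, Submodule.ker_mkQ]
  have hmapker : Submodule.map (g ∘ₗ W.subtype) (LinearMap.ker f) = W.map g ⊓ M := by
    rw [hker, Submodule.map_comap_eq, LinearMap.range_comp, Submodule.range_subtype, inf_comm]
  have h1 : finrank ℝ ↥(LinearMap.ker f) = finrank ℝ ↥(W.map g ⊓ M) := by
    rw [← hmapker]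
    exact (Submodule.equivMapOfInjective _ hinj _).finrank_eq
  have h2 := LinearMap.finrank_range_add_finrank_ker f
  omega

theorem le_finrank_range_of_indep {g : V →ₗ[ℝ] V} {W M : Submodule ℝ V} {r : ℕ}
    (w : Fin r → V) (hw : ∀ i, w i ∈ W)
    (hind : LinearIndependent ℝ (fun i => M.mkQ (g (w i)))) :
    r ≤ finrank ℝ ↥(LinearMap.range (M.mkQ ∘ₗ (g ∘ₗ W.subtype))) := by
  set f := M.mkQ ∘ₗ (g ∘ₗ W.subtype) with hf
  have hv : ∀ i, M.mkQ (g (w i)) ∈ LinearMap.range f := fun i => ⟨⟨w i, hw i⟩, rfl⟩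
  let v : Fin r → ↥(LinearMap.range f) := fun i => ⟨M.mkQ (g (w i)), hv i⟩
  have hvi : LinearIndependent ℝ v := by
    apply LinearIndependent.of_comp (LinearMap.range f).subtype
    exact hind
  simpa using hvi.fintype_card_le_finrank

theorem linearIndependent_of_det_ne_zero {Q : Type*} [AddCommGroup Q] [Module ℝ Q]
    {r : ℕ} (v : Fin r → Q) (φ : Fin r → (Q →ₗ[ℝ] ℝ))
    (hdet : (Matrix.of fun i j => φ j (v i)).det ≠ 0) : LinearIndependent ℝ v := by
  rw [Fintype.linearIndependent_iff]
  intro c hc i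
  have hrow : ∀ j, ∑ i, c i * φ j (v i) = 0 := by
    intro j
    have h := congrArg (φ j) hc
    simpa [map_sum, map_smul, smul_eq_mul] using h
  have hvm : Matrix.vecMul c (Matrix.of fun i j => φ j (v i)) = 0 := by
    funext j
    simpa [Matrix.vecMul, dotProduct] using hrow j
  have hu : IsUnit (Matrix.of fun i j => φ j (v i)) :=
    (Matrix.isUnit_iff_isUnit_det _).mpr (isUnit_iff_ne_zero.mpr hdet)
  have hc0 : c = 0 := Matrix.vecMul_injective_iff_isUnit.mpr hu
    (by show Matrix.vecMul c _ = Matrix.vecMul 0 _; rw [hvm, Matrix.zero_vecMul])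
  exact congrFun hc0 i

theorem exists_w_phi (g : V →ₗ[ℝ] V) (W M : Submodule ℝ V) :
    ∃ (w : Fin (finrank ℝ ↥(LinearMap.range (M.mkQ ∘ₗ (g ∘ₗ W.subtype)))) → V)
      (φ : Fin (finrank ℝ ↥(LinearMap.range (M.mkQ ∘ₗ (g ∘ₗ W.subtype)))) →
        ((V ⧸ M) →ₗ[ℝ] ℝ)),
      (∀ i, w i ∈ W) ∧ (Matrix.of fun i j => φ j (M.mkQ (g (w i)))).det ≠ 0 := by
  set f := M.mkQ ∘ₗ (g ∘ₗ W.subtype) with hf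
  set r := finrank ℝ ↥(LinearMap.range f) with hr
  let B := Module.finBasis ℝ ↥(LinearMap.range f)
  have hB : ∀ i : Fin r, ∃ u : ↥W, f u = ((B i : ↥(LinearMap.range f)) : V ⧸ M) :=
    fun i => (B i).2
  choose u hu using hB
  obtain ⟨q, hq⟩ := Submodule.exists_isCompl (LinearMap.range f)
  let π := Submodule.linearProjOfIsCompl _ q hq
  refine ⟨fun i => (u i : V), fun j => (B.coord j) ∘ₗ π, fun i => (u i).2, ?_⟩
  have hfu : ∀ i, M.mkQ (g ((u i : V))) = ((B i : ↥(LinearMap.range f)) : V ⧸ M) := by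
    intro i
    rw [← hu i]
    rfl
  have hentry : ∀ i j, ((B.coord j) ∘ₗ π) (M.mkQ (g ((u i : V)))) =
      (1 : Matrix (Fin r) (Fin r) ℝ) i j := by
    intro i j
    rw [LinearMap.comp_apply, hfu i]
    have hπ : π ((B i : ↥(LinearMap.range f)) : V ⧸ M) = B i :=
      Submodule.linearProjOfIsCompl_apply_left hq (B i)
    rw [hπ, Basis.coord_apply, Basis.repr_self, Matrix.one_apply]
    simp [Finsupp.single_apply, eq_comm]
  have hmat : (Matrix.of fun i j => ((B.coord j) ∘ₗ π) (M.mkQ (g ((u i : V))))) =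
      (1 : Matrix (Fin r) (Fin r) ℝ) := by
    ext i j
    exact hentry i j
  rw [hmat, Matrix.det_one]
  exact one_ne_zero

end LinAlg

section Main

variable {V : Type*} [NormedAddCommGroup V] [NormedSpace ℝ V] [FiniteDimensional ℝ V]

/-- the linear map underlying a unit of `V →L[ℝ] V` -/
noncomputable def lin (h : (V →L[ℝ] V)ˣ) : V →ₗ[ℝ] V :=
  ((h : V →L[ℝ] V) : V →ₗ[ℝ] V)

theorem lin_mul (g h : (V →L[ℝ] V)ˣ) : lin (g * h) = (lin g) ∘ₗ (lin h) := by
  unfold lin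
  rw [Units.val_mul]
  rfl

theorem lin_one : lin (1 : (V →L[ℝ] V)ˣ) = LinearMap.id (R := ℝ) (M := V) := rfl

theorem lin_injective (h : (V →L[ℝ] V)ˣ) : Function.Injective (lin h) := by
  apply Function.LeftInverse.injective (g := lin h⁻¹)
  intro x
  have h1 : (lin h⁻¹ ∘ₗ lin h) x = x := by
    rw [← lin_mul, show h⁻¹ * h = 1 from inv_mul_cancel h, lin_one]
    rfl
  exact h1

theorem map_lin_mul (g h : (V →L[ℝ] V)ˣ) (S : Submodule ℝ V) :
    S.map (lin (g * h)) = (S.map (lin h)).map (lin g) := by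
  rw [lin_mul, Submodule.map_comp]

theorem finrank_map_lin (g : (V →L[ℝ] V)ˣ) (S : Submodule ℝ V) :
    finrank ℝ ↥(S.map (lin g)) = finrank ℝ ↥S :=
  ((Submodule.equivMapOfInjective _ (lin_injective g) S).finrank_eq).symm

theorem map_lin_inv_map (g : (V →L[ℝ] V)ˣ) (S : Submodule ℝ V) :
    (S.map (lin g)).map (lin g⁻¹) = S := by
  rw [← map_lin_mul, show g⁻¹ * g = 1 from inv_mul_cancel g, lin_one, Submodule.map_id]

variable (b : Basis (Fin (finrank ℝ V)) ℝ V)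

/-- matrix entries of a unit -/
noncomputable def ptm (h : (V →L[ℝ] V)ˣ) : (Fin (finrank ℝ V) × Fin (finrank ℝ V)) → ℝ :=
  fun ij => LinearMap.toMatrix b b (lin h) ij.1 ij.2

theorem ptm_mul (g h : (V →L[ℝ] V)ˣ) : ptm b (g * h) = pmul (ptm b g) (ptm b h) := by
  funext ij
  unfold ptm pmul
  rw [lin_mul, LinearMap.toMatrix_comp b b b, Matrix.mul_apply]

theorem ptm_one : ptm b (1 : (V →L[ℝ] V)ˣ) = pone := by
  funext ij
  unfold ptm pone
  rw [lin_one, LinearMap.toMatrix_id, Matrix.one_apply]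

/-- a linear functional applied to `g w`, as a polynomial in the matrix entries of `g` -/
noncomputable def funcPoly (ψ : V →ₗ[ℝ] ℝ) (w : V) :
    MvPolynomial (Fin (finrank ℝ V) × Fin (finrank ℝ V)) ℝ :=
  ∑ lk : Fin (finrank ℝ V) × Fin (finrank ℝ V),
    MvPolynomial.C (ψ (b lk.1) * b.repr w lk.2) * MvPolynomial.X lk

theorem eval_funcPoly (ψ : V →ₗ[ℝ] ℝ) (w : V) (h : (V →L[ℝ] V)ˣ) :
    eval (ptm b h) (funcPoly b ψ w) = ψ (lin h w) := by
  set g := lin h with hg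
  rw [funcPoly, map_sum]
  simp only [map_mul, eval_C, eval_X]
  have hgw : ψ (g w) = ∑ k, b.repr w k * ψ (g (b k)) := by
    conv_lhs => rw [← Basis.sum_repr b w, map_sum, map_sum]
    exact Finset.sum_congr rfl fun k _ => by rw [map_smul, map_smul, smul_eq_mul]
  have hgb : ∀ k, ψ (g (b k)) = ∑ l, LinearMap.toMatrix b b g l k * ψ (b l) := by
    intro k
    conv_lhs => rw [← Basis.sum_repr b (g (b k)), map_sum]
    refine Finset.sum_congr rfl fun l _ => ?_
    rw [map_smul, smul_eq_mul, LinearMap.toMatrix_apply]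
  rw [hgw]
  rw [Fintype.sum_prod_type]
  rw [Finset.sum_comm]
  refine Finset.sum_congr rfl fun k _ => ?_
  rw [hgb k, Finset.mul_sum]
  refine Finset.sum_congr rfl fun l _ => ?_
  show ψ (b l) * (b.repr w) k * ptm b h (l, k) = (b.repr w) k * (LinearMap.toMatrix b b g l k * ψ (b l))
  unfold ptm
  rw [← hg]
  ring

/-- the minimal intersection dimension over the group -/
noncomputable def mdim (H : Subgroup (V →L[ℝ] V)ˣ) (W M : Submodule ℝ V) : ℕ :=
  sInf {k | ∃ h ∈ H, finrank ℝ ↥(W.map (lin h) ⊓ M) = k}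

theorem mdim_nonempty (H : Subgroup (V →L[ℝ] V)ˣ) (W M : Submodule ℝ V) :
    {k | ∃ h ∈ H, finrank ℝ ↥(W.map (lin h) ⊓ M) = k}.Nonempty :=
  ⟨_, 1, H.one_mem, rfl⟩

theorem mdim_le (H : Subgroup (V →L[ℝ] V)ˣ) (W M : Submodule ℝ V)
    {h : (V →L[ℝ] V)ˣ} (hh : h ∈ H) :
    mdim H W M ≤ finrank ℝ ↥(W.map (lin h) ⊓ M) :=
  Nat.sInf_le ⟨h, hh, rfl⟩

theorem mdim_attained (H : Subgroup (V →L[ℝ] V)ˣ) (W M : Submodule ℝ V) :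
    ∃ h ∈ H, finrank ℝ ↥(W.map (lin h) ⊓ M) = mdim H W M :=
  Nat.sInf_mem (mdim_nonempty H W M)

/-- KEY2: a polynomial witnessing the generic (minimal) intersection dimension -/
theorem exists_poly_witness (H : Subgroup (V →L[ℝ] V)ˣ) (W M : Submodule ℝ V) :
    ∃ p : MvPolynomial (Fin (finrank ℝ V) × Fin (finrank ℝ V)) ℝ,
      (∃ h ∈ H, eval (ptm b h) p ≠ 0) ∧
      ∀ h : (V →L[ℝ] V)ˣ, eval (ptm b h) p ≠ 0 →
        finrank ℝ ↥(W.map (lin h) ⊓ M) ≤ mdim H W M := by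
  obtain ⟨h₀, hh₀, hmin⟩ := mdim_attained H W M
  set r := finrank ℝ ↥(LinearMap.range (M.mkQ ∘ₗ ((lin h₀) ∘ₗ W.subtype))) with hr
  obtain ⟨w, φ, hwW, hdet⟩ := exists_w_phi (lin h₀) W M
  set p := (Matrix.of fun i j : Fin r =>
      funcPoly b ((φ j) ∘ₗ M.mkQ) (w i)).det with hp
  have heval : ∀ h : (V →L[ℝ] V)ˣ, eval (ptm b h) p =
      (Matrix.of fun i j : Fin r => φ j (M.mkQ (lin h (w i)))).det := by
    intro h
    rw [hp, RingHom.map_det]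
    congr 1
    ext i j
    simp only [RingHom.mapMatrix_apply, Matrix.map_apply, Matrix.of_apply]
    rw [eval_funcPoly]
    rfl
  have hA₀ := finrank_inf_add_finrank_range (lin h₀) (lin_injective h₀) W M
  refine ⟨p, ⟨h₀, hh₀, ?_⟩, ?_⟩
  · rw [heval h₀]
    exact hdet
  · intro h hne
    rw [heval h] at hne
    have hind : LinearIndependent ℝ (fun i => M.mkQ (lin h (w i))) :=
      linearIndependent_of_det_ne_zero _ _ hne
    have hle : r ≤ finrank ℝ ↥(LinearMap.range (M.mkQ ∘ₗ ((lin h) ∘ₗ W.subtype))) :=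
      le_finrank_range_of_indep w hwW hind
    have hA := finrank_inf_add_finrank_range (lin h) (lin_injective h) W M
    omega

end Main

section Assembly

variable {V : Type*} [NormedAddCommGroup V] [NormedSpace ℝ V] [FiniteDimensional ℝ V]

theorem mdim_le_finrank (H : Subgroup (V →L[ℝ] V)ˣ) (W M : Submodule ℝ V) :
    mdim H W M ≤ finrank ℝ ↥W := by
  refine le_trans (mdim_le H W M H.one_mem) ?_
  rw [lin_one, Submodule.map_id]
  exact Submodule.finrank_mono inf_le_left

theorem mdim_top (H : Subgroup (V →L[ℝ] V)ˣ) (W : Submodule ℝ V) :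
    mdim H W ⊤ = finrank ℝ ↥W := by
  have hval : ∀ h : (V →L[ℝ] V)ˣ, finrank ℝ ↥(W.map (lin h) ⊓ ⊤) = finrank ℝ ↥W := by
    intro h
    rw [inf_top_eq, finrank_map_lin]
  apply le_antisymm
  · rw [← hval 1]
    exact mdim_le H W ⊤ H.one_mem
  · obtain ⟨h, hh, he⟩ := mdim_attained H W ⊤
    rw [← he, hval h]

theorem mdim_map (H : Subgroup (V →L[ℝ] V)ˣ) (W M : Submodule ℝ V)
    {g : (V →L[ℝ] V)ˣ} (hg : g ∈ H) :
    mdim H W (M.map (lin g)) = mdim H W M := by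
  unfold mdim
  congr 1
  ext k
  constructor
  · rintro ⟨h, hh, rfl⟩
    refine ⟨g⁻¹ * h, H.mul_mem (H.inv_mem hg) hh, ?_⟩
    have e1 : W.map (lin (g⁻¹ * h)) ⊓ M = (W.map (lin h) ⊓ M.map (lin g)).map (lin g⁻¹) := by
      rw [Submodule.map_inf _ (lin_injective g⁻¹), map_lin_inv_map, ← map_lin_mul]
    rw [e1, finrank_map_lin]
  · rintro ⟨h, hh, rfl⟩
    refine ⟨g * h, H.mul_mem hg hh, ?_⟩
    have e1 : W.map (lin (g * h)) ⊓ M.map (lin g) = (W.map (lin h) ⊓ M).map (lin g) := by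
      rw [Submodule.map_inf _ (lin_injective g), ← map_lin_mul]
    rw [e1, finrank_map_lin]

theorem mdim_supermodular
    (H : Subgroup (V →L[ℝ] V)ˣ)
    (hconn : IsConnected (H : Set (V →L[ℝ] V)ˣ))
    (W : Submodule ℝ V) (A B : Submodule ℝ V) :
    mdim H W A + mdim H W B ≤ mdim H W (A ⊔ B) + mdim H W (A ⊓ B) := by
  classical
  set b : Basis (Fin (finrank ℝ V)) ℝ V := Module.finBasis ℝ V with hb
  -- the image of H in matrix space
  set T : Set ((Fin (finrank ℝ V) × Fin (finrank ℝ V)) → ℝ) :=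
    (fun h : (V →L[ℝ] V)ˣ => ptm b h) '' (H : Set (V →L[ℝ] V)ˣ) with hT
  have hmemT : ∀ x, x ∈ T ↔ ∃ h ∈ H, ptm b h = x := by
    intro x
    simp [hT, Set.mem_image, SetLike.mem_coe]
  have honeT : pone ∈ T := (hmemT pone).mpr ⟨1, H.one_mem, ptm_one b⟩
  have hmulT : ∀ x ∈ T, ∀ y ∈ T, pmul x y ∈ T := by
    intro x hx y hy
    obtain ⟨h1, hh1, rfl⟩ := (hmemT x).mp hx
    obtain ⟨h2, hh2, rfl⟩ := (hmemT y).mp hy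
    exact (hmemT _).mpr ⟨h1 * h2, H.mul_mem hh1 hh2, ptm_mul b h1 h2⟩
  have hinvT : ∀ x ∈ T, ∃ y ∈ T, pmul x y = pone ∧ pmul y x = pone := by
    intro x hx
    obtain ⟨h, hh, rfl⟩ := (hmemT x).mp hx
    refine ⟨ptm b h⁻¹, (hmemT _).mpr ⟨h⁻¹, H.inv_mem hh, rfl⟩, ?_, ?_⟩
    · rw [← ptm_mul, show h * h⁻¹ = 1 from mul_inv_cancel h, ptm_one]
    · rw [← ptm_mul, show h⁻¹ * h = 1 from inv_mul_cancel h, ptm_one]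
  have hcontm : Continuous (fun h : (V →L[ℝ] V)ˣ => ptm b h) := by
    let Φ : (V →L[ℝ] V) →ₗ[ℝ] ((Fin (finrank ℝ V) × Fin (finrank ℝ V)) → ℝ) :=
      { toFun := fun g => fun ij =>
          LinearMap.toMatrix b b (↑g : V →ₗ[ℝ] V) ij.1 ij.2
        map_add' := by
          intro f g
          funext ij
          simp [ContinuousLinearMap.coe_add, map_add, Matrix.add_apply]
        map_smul' := by
          intro c f
          funext ij
          simp [ContinuousLinearMap.coe_smul, map_smul, Matrix.smul_apply] }
    have hΦ : Continuous Φ := Φ.continuous_of_finiteDimensional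
    exact hΦ.comp Units.continuous_val
  have hTconn : IsPreconnected T :=
    (hconn.image _ hcontm.continuousOn).isPreconnected
  -- apply the two polynomial witnesses
  obtain ⟨p, hp1, hp2⟩ := exists_poly_witness b H W (A ⊔ B)
  obtain ⟨q, hq1, hq2⟩ := exists_poly_witness b H W (A ⊓ B)
  have hp1' : ∃ x ∈ T, eval x p ≠ 0 := by
    obtain ⟨h, hh, hne⟩ := hp1
    exact ⟨ptm b h, (hmemT _).mpr ⟨h, hh, rfl⟩, hne⟩
  have hq1' : ∃ x ∈ T, eval x q ≠ 0 := by
    obtain ⟨h, hh, hne⟩ := hq1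
    exact ⟨ptm b h, (hmemT _).mpr ⟨h, hh, rfl⟩, hne⟩
  obtain ⟨t, htT, htp, htq⟩ := exists_both_ne honeT hmulT hinvT hTconn hp1' hq1'
  obtain ⟨h, hh, rfl⟩ := (hmemT t).mp htT
  -- now chain the inequalities
  have e1 := Submodule.finrank_sup_add_finrank_inf_eq (W.map (lin h) ⊓ A) (W.map (lin h) ⊓ B)
  have le1 : finrank ℝ ↥((W.map (lin h) ⊓ A) ⊔ (W.map (lin h) ⊓ B)) ≤
      finrank ℝ ↥(W.map (lin h) ⊓ (A ⊔ B)) :=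
    Submodule.finrank_mono (sup_le (inf_le_inf_left _ le_sup_left) (inf_le_inf_left _ le_sup_right))
  have heqinf : (W.map (lin h) ⊓ A) ⊓ (W.map (lin h) ⊓ B) = W.map (lin h) ⊓ (A ⊓ B) :=
    (inf_inf_distrib_left _ _ _).symm
  have le2 : finrank ℝ ↥(W.map (lin h) ⊓ (A ⊔ B)) ≤ mdim H W (A ⊔ B) := hp2 h htp
  have le3 : finrank ℝ ↥(W.map (lin h) ⊓ (A ⊓ B)) ≤ mdim H W (A ⊓ B) := hq2 h htq
  have le4 : mdim H W A ≤ finrank ℝ ↥(W.map (lin h) ⊓ A) := mdim_le H W A hh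
  have le5 : mdim H W B ≤ finrank ℝ ↥(W.map (lin h) ⊓ B) := mdim_le H W B hh
  rw [heqinf] at e1
  omega

end Assembly

theorem two_eq {p1 q1 p2 q2 : ℕ} (h1 : p1 ≤ q1) (h2 : p2 ≤ q2) (h3 : q1 + q2 ≤ p1 + p2) :
    p1 = q1 ∧ p2 = q2 := by omega

end Subcrit

set_option maxHeartbeats 2000000 in
open Subcrit in
/-- Subcritical intersection bound for a single pair of subspaces:
if a norm-topology connected subgroup `H` of `GL(V)` acts irreducibly on the
nonzero finite-dimensional real vector space `V`, then for all subspaces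
`W, W'` there is `h ∈ H` with `dim((h·W) ∩ W') · dim V ≤ dim W · dim W'`. -/
theorem subcritical_intersection_single
    (V : Type*) [NormedAddCommGroup V] [NormedSpace ℝ V]
    [FiniteDimensional ℝ V] [Nontrivial V]
    (H : Subgroup (V →L[ℝ] V)ˣ)
    (hconn : IsConnected (H : Set (V →L[ℝ] V)ˣ))
    (hirr : ∀ S : Submodule ℝ V,
      (∀ h ∈ H, S.map ((h : V →L[ℝ] V) : V →ₗ[ℝ] V) = S) → S = ⊥ ∨ S = ⊤)
    (W W' : Submodule ℝ V) :
    ∃ h ∈ H,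
      finrank ℝ ↥(W.map ((h : V →L[ℝ] V) : V →ₗ[ℝ] V) ⊓ W') * finrank ℝ V ≤
        finrank ℝ ↥W * finrank ℝ ↥W' := by
  classical
  have htopbot : (⊤ : Submodule ℝ V) ≠ ⊥ := by
    intro h
    obtain ⟨x, hx⟩ := exists_ne (0 : V)
    have hxt : x ∈ (⊤ : Submodule ℝ V) := Submodule.mem_top
    rw [h] at hxt
    exact hx (Submodule.mem_bot ℝ |>.mp hxt)
  -- the set of achievable (min-dimension, dimension) pairs
  set P : Finset (ℕ × ℕ) :=
    ((Finset.range (finrank ℝ ↥W + 1)) ×ˢ (Finset.range (finrank ℝ V + 1))).filter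
      (fun xy => ∃ M : Submodule ℝ V, M ≠ ⊥ ∧ mdim H W M = xy.1 ∧ finrank ℝ ↥M = xy.2)
    with hP
  have hPmem : ∀ M : Submodule ℝ V, M ≠ ⊥ → (mdim H W M, finrank ℝ ↥M) ∈ P := by
    intro M hM
    rw [hP, Finset.mem_filter]
    refine ⟨Finset.mem_product.mpr ⟨?_, ?_⟩, M, hM, rfl, rfl⟩
    · exact Finset.mem_range.mpr (Nat.lt_succ_of_le (mdim_le_finrank H W M))
    · exact Finset.mem_range.mpr (Nat.lt_succ_of_le (Submodule.finrank_le M))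
  have hPne : P.Nonempty := ⟨_, hPmem ⊤ htopbot⟩
  obtain ⟨xy₀, hxy₀P, hmax⟩ := P.exists_max_image (fun xy => (xy.1 : ℚ) / (xy.2 : ℚ)) hPne
  obtain ⟨-, M₀, hM₀ne, hM₀1, hM₀2⟩ := Finset.mem_filter.mp hxy₀P
  have hM₀pos : 0 < finrank ℝ ↥M₀ := by
    rcases Nat.eq_zero_or_pos (finrank ℝ ↥M₀) with h | h
    · exact absurd (Submodule.finrank_eq_zero.mp h) hM₀ne
    · exact h
  -- ratio inequality in product form
  have hratio : ∀ M : Submodule ℝ V, M ≠ ⊥ →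
      mdim H W M * finrank ℝ ↥M₀ ≤ mdim H W M₀ * finrank ℝ ↥M := by
    intro M hM
    have h1 := hmax _ (hPmem M hM)
    rw [← hM₀1, ← hM₀2] at h1
    have hMpos : 0 < finrank ℝ ↥M := by
      rcases Nat.eq_zero_or_pos (finrank ℝ ↥M) with h | h
      · exact absurd (Submodule.finrank_eq_zero.mp h) hM
      · exact h
    rw [div_le_div_iff₀ (by exact_mod_cast hMpos) (by exact_mod_cast hM₀pos)] at h1
    exact_mod_cast h1
  have hbot : mdim H W ⊥ = 0 := by
    have h1 := mdim_le H W ⊥ H.one_mem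
    rw [inf_bot_eq] at h1
    simp only [finrank_bot] at h1
    omega
  have hle_all : ∀ M : Submodule ℝ V,
      mdim H W M * finrank ℝ ↥M₀ ≤ mdim H W M₀ * finrank ℝ ↥M := by
    intro M
    rcases eq_or_ne M ⊥ with rfl | h
    · simp [hbot]
    · exact hratio M h
  -- the set of submodules achieving the extremal ratio
  set S : Set (Submodule ℝ V) :=
    {M | mdim H W M * finrank ℝ ↥M₀ = mdim H W M₀ * finrank ℝ ↥M} with hS
  have hM₀S : M₀ ∈ S := rfl
  have hclosed : ∀ A B : Submodule ℝ V, A ∈ S → B ∈ S → (A ⊔ B) ∈ S ∧ (A ⊓ B) ∈ S := by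
    intro A B hA hB
    have hsupm := mdim_supermodular H hconn W A B
    have h1 := hle_all (A ⊔ B)
    have h2 := hle_all (A ⊓ B)
    have e := Submodule.finrank_sup_add_finrank_inf_eq A B
    have hAeq : mdim H W A * finrank ℝ ↥M₀ = mdim H W M₀ * finrank ℝ ↥A := hA
    have hBeq : mdim H W B * finrank ℝ ↥M₀ = mdim H W M₀ * finrank ℝ ↥B := hB
    have h3 : mdim H W M₀ * finrank ℝ ↥(A ⊔ B) + mdim H W M₀ * finrank ℝ ↥(A ⊓ B) ≤
        mdim H W (A ⊔ B) * finrank ℝ ↥M₀ + mdim H W (A ⊓ B) * finrank ℝ ↥M₀ := by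
      calc mdim H W M₀ * finrank ℝ ↥(A ⊔ B) + mdim H W M₀ * finrank ℝ ↥(A ⊓ B)
          = mdim H W M₀ * (finrank ℝ ↥(A ⊔ B) + finrank ℝ ↥(A ⊓ B)) := (mul_add _ _ _).symm
        _ = mdim H W M₀ * (finrank ℝ ↥A + finrank ℝ ↥B) := by rw [e]
        _ = mdim H W M₀ * finrank ℝ ↥A + mdim H W M₀ * finrank ℝ ↥B := mul_add _ _ _
        _ = mdim H W A * finrank ℝ ↥M₀ + mdim H W B * finrank ℝ ↥M₀ := by
            rw [hAeq, hBeq]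
        _ = (mdim H W A + mdim H W B) * finrank ℝ ↥M₀ := (add_mul _ _ _).symm
        _ ≤ (mdim H W (A ⊔ B) + mdim H W (A ⊓ B)) * finrank ℝ ↥M₀ :=
            Nat.mul_le_mul_right _ hsupm
        _ = mdim H W (A ⊔ B) * finrank ℝ ↥M₀ + mdim H W (A ⊓ B) * finrank ℝ ↥M₀ :=
            add_mul _ _ _
    obtain ⟨e1, e2⟩ := two_eq h1 h2 h3
    exact ⟨e1, e2⟩
  -- take an element of S of maximal dimension
  set K : Set ℕ := {k | ∃ M ∈ S, finrank ℝ ↥M = k} with hK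
  have hKne : K.Nonempty := ⟨_, M₀, hM₀S, rfl⟩
  have hKbdd : BddAbove K := by
    refine ⟨finrank ℝ V, ?_⟩
    rintro k ⟨M, _, rfl⟩
    exact Submodule.finrank_le M
  obtain ⟨N, hNS, hNrank⟩ := (Nat.sSup_mem hKne hKbdd : sSup K ∈ K)
  have hNmax : ∀ M ∈ S, finrank ℝ ↥M ≤ finrank ℝ ↥N := by
    intro M hM
    rw [hNrank]
    exact le_csSup hKbdd ⟨M, hM, rfl⟩
  -- N is invariant under H
  have hNinv : ∀ g : (V →L[ℝ] V)ˣ, g ∈ H → N.map (lin g) = N := by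
    intro g hg
    have h1 : N.map (lin g) ∈ S := by
      simp only [hS, Set.mem_setOf_eq] at hNS ⊢
      rw [mdim_map H W N hg, finrank_map_lin]
      exact hNS
    have h2 : (N ⊔ N.map (lin g)) ∈ S := (hclosed _ _ hNS h1).1
    have h3 : N = N ⊔ N.map (lin g) :=
      Submodule.eq_of_le_of_finrank_le le_sup_left (hNmax _ h2)
    have h4 : N.map (lin g) ≤ N := le_sup_right.trans h3.ge
    exact Submodule.eq_of_le_of_finrank_le h4 (finrank_map_lin g N).symm.le
  -- by irreducibility, N = ⊤
  have hNtop : N = ⊤ := by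
    rcases hirr N (fun h hh => hNinv h hh) with h | h
    · exfalso
      have hle := hNmax M₀ hM₀S
      rw [h] at hle
      simp only [finrank_bot] at hle
      omega
    · exact h
  have hTopS : (⊤ : Submodule ℝ V) ∈ S := hNtop ▸ hNS
  have htop_eq : finrank ℝ ↥W * finrank ℝ ↥M₀ = mdim H W M₀ * finrank ℝ V := by
    have h1 := hTopS
    simp only [hS, Set.mem_setOf_eq] at h1
    rwa [mdim_top, finrank_top] at h1
  -- the final bound
  have hfin : mdim H W W' * finrank ℝ V ≤ finrank ℝ ↥W * finrank ℝ ↥W' := by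
    have h1 := hle_all W'
    have h2 : (mdim H W W' * finrank ℝ V) * finrank ℝ ↥M₀ ≤
        (finrank ℝ ↥W * finrank ℝ ↥W') * finrank ℝ ↥M₀ := by
      calc (mdim H W W' * finrank ℝ V) * finrank ℝ ↥M₀
          = (mdim H W W' * finrank ℝ ↥M₀) * finrank ℝ V := by ring
        _ ≤ (mdim H W M₀ * finrank ℝ ↥W') * finrank ℝ V := Nat.mul_le_mul_right _ h1
        _ = (mdim H W M₀ * finrank ℝ V) * finrank ℝ ↥W' := by ring
        _ = (finrank ℝ ↥W * finrank ℝ ↥M₀) * finrank ℝ ↥W' := by rw [htop_eq]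
        _ = (finrank ℝ ↥W * finrank ℝ ↥W') * finrank ℝ ↥M₀ := by ring
    exact Nat.le_of_mul_le_mul_right h2 hM₀pos
  obtain ⟨h, hh, he⟩ := mdim_attained H W W'
  refine ⟨h, hh, ?_⟩
  rw [show W.map ((h : V →L[ℝ] V) : V →ₗ[ℝ] V) = W.map (lin h) from rfl, he]
  exact hfin
end

section
/- Let V be a finite-dimensional vector space over a field and let G be a group acting on V by linear automorphisms such that the only G-invariant linear subspaces of V are {0} and V. Then for all linear subspaces W, W' of V with {0} ≠ W ≠ V and {0} ≠ W' ≠ V, there exists g ∈ G such that dim((g·W) ∩ W') < min(dim W, dim W'). -/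
open Module

lemma map_map_mul {K V G : Type*} [Field K] [AddCommGroup V] [Module K V] [Group G]
    (ρ : G →* (V ≃ₗ[K] V)) (W : Submodule K V) (g i : G) :
    (W.map (ρ i).toLinearMap).map (ρ g).toLinearMap = W.map (ρ (g * i)).toLinearMap := by
  rw [← Submodule.map_comp, map_mul]
  rfl

/-- If a group `G` acts irreducibly by linear automorphisms on a
finite-dimensional vector space `V`, then for any proper nontrivial subspaces
`W, W'` some translate `g·W` meets `W'` in dimension strictly less than
`min(dim W, dim W')`. -/
theorem exists_translate_dim_inter_lt
    (K V G : Type*) [Field K] [AddCommGroup V] [Module K V]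
    [FiniteDimensional K V] [Group G]
    (ρ : G →* (V ≃ₗ[K] V))
    (hirr : ∀ S : Submodule K V,
      (∀ g : G, S.map (ρ g).toLinearMap = S) → S = ⊥ ∨ S = ⊤)
    (W W' : Submodule K V)
    (hW0 : W ≠ ⊥) (hWt : W ≠ ⊤) (hW'0 : W' ≠ ⊥) (hW't : W' ≠ ⊤) :
    ∃ g : G,
      finrank K ↥(W.map (ρ g).toLinearMap ⊓ W') <
        min (finrank K ↥W) (finrank K ↥W') := by
  by_contra h
  push_neg at h
  have hdim : ∀ g : G, finrank K ↥(W.map (ρ g).toLinearMap) = finrank K ↥W := fun g =>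
    LinearEquiv.finrank_map_eq (ρ g) W
  have hmapW1 : W.map (ρ 1).toLinearMap = W := by
    rw [map_one]; exact Submodule.map_id W
  rcases le_total (finrank K ↥W) (finrank K ↥W') with hle | hle
  · -- every translate of W is inside W'
    have hsub : ∀ g : G, W.map (ρ g).toLinearMap ≤ W' := by
      intro g
      have heq : W.map (ρ g).toLinearMap ⊓ W' = W.map (ρ g).toLinearMap := by
        apply Submodule.eq_of_le_of_finrank_le inf_le_left
        rw [hdim g]
        have := h g
        rwa [min_eq_left hle] at this
      rw [← heq]; exact inf_le_right
    set S := ⨆ g : G, W.map (ρ g).toLinearMap with hS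
    have hSinv : ∀ g : G, S.map (ρ g).toLinearMap = S := by
      intro g
      rw [hS, Submodule.map_iSup]
      simp only [map_map_mul ρ W g]
      exact (Equiv.mulLeft g).iSup_congr (fun i => rfl)
    rcases hirr S hSinv with hb | ht
    · have : W ≤ S := hmapW1 ▸ le_iSup (fun g : G => W.map (ρ g).toLinearMap) 1
      exact hW0 (le_bot_iff.mp (hb ▸ this))
    · have : S ≤ W' := iSup_le hsub
      exact hW't (top_le_iff.mp (ht ▸ this))
  · -- W' is inside every translate of W
    have hsub : ∀ g : G, W' ≤ W.map (ρ g).toLinearMap := by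
      intro g
      have heq : W.map (ρ g).toLinearMap ⊓ W' = W' := by
        apply Submodule.eq_of_le_of_finrank_le inf_le_right
        have := h g
        rwa [min_eq_right hle] at this
      rw [← heq]; exact inf_le_left
    set T := ⨅ g : G, W.map (ρ g).toLinearMap with hT
    have hTinv : ∀ g : G, T.map (ρ g).toLinearMap = T := by
      intro g
      have : ∀ p : Submodule K V, p.map (ρ g).toLinearMap = p.comap (ρ g).symm.toLinearMap := by
        intro p; exact Submodule.map_equiv_eq_comap_symm (ρ g) p
      rw [hT, this, Submodule.comap_iInf]
      simp only [← this]
      simp only [map_map_mul ρ W g]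
      exact (Equiv.mulLeft g).iInf_congr (fun i => rfl)
    rcases hirr T hTinv with hb | ht
    · have : W' ≤ T := le_iInf hsub
      exact hW'0 (le_bot_iff.mp (hb ▸ this))
    · have : T ≤ W := hmapW1 ▸ iInf_le (fun g : G => W.map (ρ g).toLinearMap) 1
      exact hWt (top_le_iff.mp (ht ▸ this))
end

section
/- Let V be a finite-dimensional real inner product space, h : V → V an invertible linear map with adjoint h*, and W ⊆ V a linear subspace. Then there exists a linear isomorphism φ from W onto h*(W) such that for every v ∈ V one has φ(π_W(h(v))) = π_{h*(W)}(v), where π_U denotes the orthogonal projection of V onto a subspace U. -/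
/-- Equivalence of the two types of projections: for an invertible linear map
`h` on a finite-dimensional real inner product space and a subspace `W`, there
is a linear isomorphism `φ : W ≃ h*(W)` with `φ ∘ π_W ∘ h = π_{h*(W)}`. -/
theorem orthogonalProjection_comp_eq_adjoint_proj
    (V : Type*) [NormedAddCommGroup V] [InnerProductSpace ℝ V]
    [FiniteDimensional ℝ V]
    (h : V →ₗ[ℝ] V) (hbij : Function.Bijective h) (W : Submodule ℝ V) :
    ∃ φ : ↥W ≃ₗ[ℝ] ↥(W.map (LinearMap.adjoint h)),
      ∀ v : V,
        φ (Submodule.orthogonalProjection W (h v)) =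
          Submodule.orthogonalProjection (W.map (LinearMap.adjoint h)) v := by
  set W' := W.map (LinearMap.adjoint h) with hW'
  set f : V →ₗ[ℝ] W := ((Submodule.orthogonalProjection W).toLinearMap).comp h with hf
  set g : V →ₗ[ℝ] W' := (Submodule.orthogonalProjection W').toLinearMap with hg
  have hfsurj : Function.Surjective f := by
    intro w
    obtain ⟨v, hv⟩ := hbij.surjective (w : V)
    exact ⟨v, by simp [hf, hv, Submodule.orthogonalProjectionOnto_mem_subspace_eq_self]⟩
  have hgsurj : Function.Surjective g := fun w =>
    ⟨w, by simp [hg, Submodule.orthogonalProjectionOnto_mem_subspace_eq_self]⟩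
  have hker : LinearMap.ker f = LinearMap.ker g := by
    ext v
    simp only [LinearMap.mem_ker, hf, hg, LinearMap.comp_apply,
      ContinuousLinearMap.coe_coe, Submodule.orthogonalProjectionOnto_eq_zero_iff]
    constructor
    · intro hv
      rw [Submodule.mem_orthogonal] at hv ⊢
      rintro u hu
      rw [hW'] at hu
      obtain ⟨w, hw, rfl⟩ := hu
      rw [LinearMap.adjoint_inner_left]
      exact hv w hw
    · intro hv
      rw [Submodule.mem_orthogonal']
      intro w hw
      have := (Submodule.mem_orthogonal' _ _ |>.mp hv) (LinearMap.adjoint h w)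
        ⟨w, hw, rfl⟩
      rwa [LinearMap.adjoint_inner_right] at this
  let e₁ := f.quotKerEquivOfSurjective hfsurj
  let e₂ := g.quotKerEquivOfSurjective hgsurj
  let q := Submodule.quotEquivOfEq _ _ hker
  refine ⟨e₁.symm.trans (q.trans e₂), fun v => ?_⟩
  have h1 : e₁ (Submodule.Quotient.mk v) = f v := rfl
  have h2 : e₂ (q (Submodule.Quotient.mk v)) = g v := rfl
  have : e₁.symm (f v) = Submodule.Quotient.mk v := by
    rw [← h1, LinearEquiv.symm_apply_apply]
  simp only [LinearEquiv.trans_apply]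
  have hfv : f v = Submodule.orthogonalProjection W (h v) := rfl
  rw [← hfv, this, h2]
  rfl
end

section
/- Let g be a Lie algebra over a field, h a Lie subalgebra of g, and r a linear subspace of g such that g = h ⊕ r as vector spaces and ⁅h, r⁆ ⊆ r. Suppose that r, regarded as an h-module via the bracket action, is nonzero, has no h-invariant linear subspaces other than {0} and r, and satisfies ⁅h, r⁆ ≠ {0}. Then every Lie ideal of g containing h is equal to g. -/
/-- If `g = h ⊕ r` with `r` a nonzero irreducible nontrivial `h`-module
(under the bracket action), then every Lie ideal of `g` containing `h` is
all of `g`. -/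
theorem lieIdeal_eq_top_of_le
    (K : Type*) [Field K] (g : Type*) [LieRing g] [LieAlgebra K g]
    (h : LieSubalgebra K g) (r : Submodule K g)
    (hcompl : IsCompl h.toSubmodule r)
    (hbr : ∀ x ∈ h, ∀ v ∈ r, ⁅x, v⁆ ∈ r)
    (hr0 : r ≠ ⊥)
    (hirr : ∀ s : Submodule K g, s ≤ r →
      (∀ x ∈ h, ∀ v ∈ s, ⁅x, v⁆ ∈ s) → s = ⊥ ∨ s = r)
    (hnontriv : ∃ x ∈ h, ∃ v ∈ r, ⁅x, v⁆ ≠ 0)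
    (I : LieIdeal K g) (hI : ∀ x ∈ h, x ∈ I) : I = ⊤ := by
  set s : Submodule K g := r ⊓ (I : Submodule K g) with hs
  have hsr : s ≤ r := inf_le_left
  have hsinv : ∀ x ∈ h, ∀ v ∈ s, ⁅x, v⁆ ∈ s := by
    intro x hx v hv
    exact ⟨hbr x hx v hv.1, I.lie_mem hv.2⟩
  have hsne : s ≠ ⊥ := by
    obtain ⟨x, hx, v, hv, hxv⟩ := hnontriv
    intro hbot
    apply hxv
    have hmem : ⁅v, x⁆ ∈ I := I.lie_mem (hI x hx)
    have : ⁅x, v⁆ ∈ s := ⟨hbr x hx v hv, by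
      rw [← lie_skew]; exact I.neg_mem hmem⟩
    · rw [hbot] at this; exact this
  have hsr' : s = r := (hirr s hsr hsinv).resolve_left hsne
  have hrI : r ≤ (I : Submodule K g) := by
    rw [← hsr']; exact inf_le_right
  have hhI : h.toSubmodule ≤ (I : Submodule K g) := fun x hx => hI x hx
  have : (⊤ : Submodule K g) ≤ (I : Submodule K g) := by
    rw [← hcompl.sup_eq_top]
    exact sup_le hhI hrI
  rw [eq_top_iff]
  intro x _
  exact this trivial
end

section
/- Let F be a field, V₁ and V₂ nonzero finite-dimensional F-vector spaces, v₁ ∈ V₁ and v₂ ∈ V₂ nonzero vectors, and g₁ : V₁ → V₁, g₂ : V₂ → V₂ linear automorphisms. In V = V₁ ⊗ V₂ consider the subspaces W = V₁ ⊗ (F·v₂) and W' = (F·v₁) ⊗ V₂. Then ((g₁ ⊗ g₂)(W)) ∩ W' is exactly the one-dimensional subspace spanned by v₁ ⊗ g₂(v₂); in particular dim(((g₁ ⊗ g₂)(W)) ∩ W') · dim V = dim W · dim W'. -/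
open Module TensorProduct

private lemma exists_dual_one (F : Type*) {M : Type*} [Field F] [AddCommGroup M]
    [Module F M] {x : M} (hx : x ≠ 0) : ∃ f : M →ₗ[F] F, f x = 1 := by
  obtain ⟨f, hf, -⟩ := Submodule.exists_dual_map_eq_bot_of_notMem
    (p := (⊥ : Submodule F M)) (by simpa using hx) inferInstance
  exact ⟨(f x)⁻¹ • f, by simp [inv_mul_cancel₀ hf]⟩

/-- Optimality of the subcritical dimension bound: with
`W = V₁ ⊗ (F·v₂)` and `W' = (F·v₁) ⊗ V₂` inside `V = V₁ ⊗ V₂`, the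
intersection `((g₁ ⊗ g₂)(W)) ⊓ W'` is exactly the line spanned by
`v₁ ⊗ g₂(v₂)`, and the bound `dim(h·W ∩ W')·dim V = dim W · dim W'`
holds with equality. -/
theorem tensor_intersection_optimal
    (F : Type*) [Field F]
    (V₁ V₂ : Type*) [AddCommGroup V₁] [Module F V₁]
    [AddCommGroup V₂] [Module F V₂]
    [FiniteDimensional F V₁] [FiniteDimensional F V₂]
    (v₁ : V₁) (hv₁ : v₁ ≠ 0) (v₂ : V₂) (hv₂ : v₂ ≠ 0)
    (g₁ : V₁ ≃ₗ[F] V₁) (g₂ : V₂ ≃ₗ[F] V₂)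
    (W W' : Submodule F (V₁ ⊗[F] V₂))
    (hW : W = LinearMap.range ((TensorProduct.mk F V₁ V₂).flip v₂))
    (hW' : W' = LinearMap.range (TensorProduct.mk F V₁ V₂ v₁)) :
    W.map (TensorProduct.map g₁.toLinearMap g₂.toLinearMap) ⊓ W' =
        Submodule.span F {v₁ ⊗ₜ[F] g₂ v₂} ∧
      finrank F ↥(Submodule.span F {v₁ ⊗ₜ[F] g₂ v₂}) = 1 ∧
      finrank F ↥(W.map (TensorProduct.map g₁.toLinearMap g₂.toLinearMap) ⊓ W') *
          finrank F (V₁ ⊗[F] V₂) =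
        finrank F ↥W * finrank F ↥W' := by
  set w : V₂ := g₂ v₂ with hwdef
  have hw : w ≠ 0 := by
    simp only [hwdef]
    exact fun h => hv₂ (g₂.map_eq_zero_iff.mp h)
  obtain ⟨f, hf⟩ := exists_dual_one F hw
  obtain ⟨f₂, hf₂⟩ := exists_dual_one F hv₂
  obtain ⟨f₁, hf₁⟩ := exists_dual_one F hv₁
  -- contraction maps
  set φ : V₁ ⊗[F] V₂ →ₗ[F] V₁ :=
    (TensorProduct.rid F V₁).toLinearMap ∘ₗ LinearMap.lTensor V₁ f with hφ
  have hφt : ∀ (x : V₁) (y : V₂), φ (x ⊗ₜ[F] y) = f y • x := by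
    intro x y; simp [hφ]
  set φ₂ : V₁ ⊗[F] V₂ →ₗ[F] V₁ :=
    (TensorProduct.rid F V₁).toLinearMap ∘ₗ LinearMap.lTensor V₁ f₂ with hφ₂
  set φ₁ : V₁ ⊗[F] V₂ →ₗ[F] V₂ :=
    (TensorProduct.lid F V₂).toLinearMap ∘ₗ LinearMap.rTensor V₂ f₁ with hφ₁
  have htne : v₁ ⊗ₜ[F] w ≠ 0 := by
    intro h
    have := congrArg φ h
    rw [hφt, hf, one_smul, map_zero] at this
    exact hv₁ this
  have hmain : W.map (TensorProduct.map g₁.toLinearMap g₂.toLinearMap) ⊓ W' =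
      Submodule.span F {v₁ ⊗ₜ[F] w} := by
    apply le_antisymm
    · rintro t ⟨⟨s, hsW, rfl⟩, hy⟩
      rw [hW] at hsW
      obtain ⟨x, rfl⟩ := hsW
      rw [hW'] at hy
      obtain ⟨y, hy⟩ := hy
      simp only [TensorProduct.mk_apply, LinearMap.flip_apply] at hy ⊢
      have hs : TensorProduct.map g₁.toLinearMap g₂.toLinearMap (x ⊗ₜ[F] v₂) =
          (g₁ x) ⊗ₜ[F] w := by simp [hwdef]
      rw [hs] at hy ⊢
      have := congrArg φ hy
      rw [hφt, hφt, hf, one_smul] at this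
      -- this : f (g₁ x ⊗ w components) ... : f w • v₁? careful direction
      -- hy : v₁ ⊗ y = g₁ x ⊗ w, so φ gives f y • v₁ = g₁ x
      rw [← this, ← TensorProduct.smul_tmul']
      exact Submodule.smul_mem _ _ (Submodule.mem_span_singleton_self _)
    · rw [Submodule.span_le, Set.singleton_subset_iff]
      refine ⟨⟨(g₁.symm v₁) ⊗ₜ[F] v₂, ?_, by simp [hwdef]⟩, ?_⟩
      · rw [hW]; exact ⟨g₁.symm v₁, rfl⟩
      · rw [hW']; exact ⟨w, rfl⟩
  have hrank1 : finrank F ↥(Submodule.span F {v₁ ⊗ₜ[F] w}) = 1 :=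
    finrank_span_singleton htne
  refine ⟨hmain, hrank1, ?_⟩
  have hWr : finrank F ↥W = finrank F V₁ := by
    rw [hW]
    have hinj : Function.Injective ((TensorProduct.mk F V₁ V₂).flip v₂) := by
      intro a b hab
      have := congrArg φ₂ hab
      simpa [hφ₂, hf₂] using this
    exact LinearMap.finrank_range_of_inj hinj
  have hW'r : finrank F ↥W' = finrank F V₂ := by
    rw [hW']
    have hinj : Function.Injective (TensorProduct.mk F V₁ V₂ v₁) := by
      intro a b hab
      have := congrArg φ₁ hab
      simpa [hφ₁, hf₁] using this
    exact LinearMap.finrank_range_of_inj hinj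
  rw [hmain, hrank1, hWr, hW'r, one_mul, Module.finrank_tensorProduct]
end

section
/- Let g be a finite-dimensional semisimple real Lie algebra, h a Lie subalgebra of g that is semisimple as a Lie algebra, and r a linear subspace of g with g = h ⊕ r as vector spaces and ⁅h, r⁆ ⊆ r, such that r is nonzero and has no h-invariant linear subspaces other than {0} and r. Let a ∈ h be an element such that the only Lie ideal of h containing a is h itself. Then the only Lie ideal of g containing a is g itself. -/
/-- If `g` is a finite-dimensional semisimple real Lie algebra, `h ≤ g` a
semisimple subalgebra with `g = h ⊕ r` where `r` is a nonzero irreducible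
`h`-module, and `a ∈ h` is contained in no proper Lie ideal of `h`, then `a`
is contained in no proper Lie ideal of `g`. -/
theorem lieIdeal_eq_top_of_mem
    (g : Type*) [LieRing g] [LieAlgebra ℝ g] [FiniteDimensional ℝ g]
    [LieAlgebra.IsSemisimple ℝ g]
    (h : LieSubalgebra ℝ g) [LieAlgebra.IsSemisimple ℝ ↥h]
    (r : Submodule ℝ g)
    (hcompl : IsCompl h.toSubmodule r)
    (hbr : ∀ x ∈ h, ∀ v ∈ r, ⁅x, v⁆ ∈ r)
    (hr0 : r ≠ ⊥)
    (hirr : ∀ s : Submodule ℝ g, s ≤ r →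
      (∀ x ∈ h, ∀ v ∈ s, ⁅x, v⁆ ∈ s) → s = ⊥ ∨ s = r)
    (a : g) (ha : a ∈ h)
    (haI : ∀ I : LieIdeal ℝ ↥h, (⟨a, ha⟩ : ↥h) ∈ I → I = ⊤) :
    ∀ J : LieIdeal ℝ g, a ∈ J → J = ⊤ := by
  intro J haJ
  -- The set of elements of `h` lying in `J` is a Lie ideal of `h`.
  let I₀ : LieIdeal ℝ ↥h :=
    { carrier := {x : ↥h | (x : g) ∈ J}
      add_mem' := fun hx hy => J.add_mem' hx hy
      zero_mem' := J.zero_mem'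
      smul_mem' := fun c x hx => J.smul_mem' c hx
      lie_mem := fun {x m} hm => J.lie_mem hm }
  have hI₀ : I₀ = ⊤ := haI I₀ haJ
  -- hence `h ≤ J`.
  have hhJ : ∀ x ∈ h, x ∈ J := by
    intro x hx
    have : (⟨x, hx⟩ : ↥h) ∈ I₀ := by rw [hI₀]; trivial
    exact this
  -- `J ⊓ r` is an `h`-invariant subspace of `r`.
  have hinv : ∀ x ∈ h, ∀ v ∈ J.toSubmodule ⊓ r, ⁅x, v⁆ ∈ J.toSubmodule ⊓ r := by
    intro x hx v hv
    exact ⟨J.lie_mem hv.1, hbr x hx v hv.2⟩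
  rcases hirr (J.toSubmodule ⊓ r) inf_le_right hinv with hbot | htop
  · -- hard case: `J ⊓ r = ⊥`.  Then `[h, r] = 0`, so `r` is one-dimensional
    -- and central in `g`, contradicting semisimplicity.
    exfalso
    have hbr0 : ∀ x ∈ h, ∀ v ∈ r, ⁅x, v⁆ = (0 : g) := by
      intro x hx v hv
      have hxJ : ⁅v, x⁆ ∈ J := J.lie_mem (hhJ x hx)
      have hxJ' : ⁅x, v⁆ ∈ J := by
        rw [← lie_skew]; exact J.toSubmodule.neg_mem hxJ
      have : ⁅x, v⁆ ∈ J.toSubmodule ⊓ r := ⟨hxJ', hbr x hx v hv⟩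
      rw [hbot] at this
      simpa using this
    obtain ⟨v, hvr, hv0⟩ := (Submodule.ne_bot_iff r).mp hr0
    -- the span of `v` is `h`-invariant, hence equals `r`.
    have hspan : (Submodule.span ℝ {v}) = r := by
      rcases hirr (Submodule.span ℝ {v})
        ((Submodule.span_singleton_le_iff_mem v r).mpr hvr)
        (by
          intro x hx w hw
          obtain ⟨c, rfl⟩ := Submodule.mem_span_singleton.mp hw
          rw [lie_smul, hbr0 x hx v hvr, smul_zero]
          exact Submodule.zero_mem _) with h1 | h2
      · exact absurd (by simpa using (Submodule.span_singleton_eq_bot (x := v)).mp h1) hv0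
      · exact h2
    -- `v` is central in `g`.
    have hvc : v ∈ LieAlgebra.center ℝ g := by
      rw [LieModule.mem_maxTrivSubmodule]
      intro z
      obtain ⟨x, hx, w, hw, rfl⟩ := Submodule.mem_sup.mp
        (by rw [codisjoint_iff.mp hcompl.codisjoint]; exact Submodule.mem_top :
          z ∈ h.toSubmodule ⊔ r)
      rw [add_lie, hbr0 x hx v hvr, zero_add]
      rw [← hspan] at hw
      obtain ⟨c, rfl⟩ := Submodule.mem_span_singleton.mp hw
      rw [smul_lie, lie_self, smul_zero]
    rw [LieAlgebra.center_eq_bot, LieSubmodule.mem_bot] at hvc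
    exact hv0 hvc
  · -- easy case: `r ≤ J`, and since also `h ≤ J`, we get `J = ⊤`.
    have hrJ : ∀ v ∈ r, v ∈ J := by
      intro v hv
      rw [← htop] at hv
      exact hv.1
    ext z
    simp only [LieSubmodule.mem_top, iff_true]
    obtain ⟨x, hx, w, hw, rfl⟩ := Submodule.mem_sup.mp
      (by rw [codisjoint_iff.mp hcompl.codisjoint]; exact Submodule.mem_top :
        z ∈ h.toSubmodule ⊔ r)
    exact J.add_mem' (hhJ x hx) (hrJ w hw)
end

section
/- For all positive integers d and k there exists a constant C > 0, depending only on d and k, such that for every nonzero polynomial P ∈ ℝ[x₁, …, x_d] of total degree at most k, every ball B ⊂ ℝ^d of positive radius, and every ε > 0, the Lebesgue measure of {x ∈ B : |P(x)| < ε} is at most C · (ε / sup_{x∈B} |P(x)|)^{1/(dk)} · Leb(B). -/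
open MeasureTheory Set MvPolynomial ENNReal

noncomputable def remezSlice (d : ℕ) (P : MvPolynomial (Fin (d+1)) ℝ) (t : ℝ) :
    MvPolynomial (Fin d) ℝ :=
  Polynomial.eval (MvPolynomial.C t) (finSuccEquiv ℝ d P)

lemma remez_eval_slice (d : ℕ) (P : MvPolynomial (Fin (d+1)) ℝ) (t : ℝ) (y : Fin d → ℝ) :
    eval y (remezSlice d P t) = eval (Fin.cons t y) P := by
  rw [eval_eq_eval_mv_eval', remezSlice]
  rw [Polynomial.eval_map, Polynomial.eval, Polynomial.hom_eval₂]
  simp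

lemma remez_totalDegree_slice (d : ℕ) (P : MvPolynomial (Fin (d+1)) ℝ) (t : ℝ) :
    (remezSlice d P t).totalDegree ≤ P.totalDegree := by
  rw [remezSlice, Polynomial.eval_eq_sum, Polynomial.sum_def]
  refine le_trans (totalDegree_finset_sum _ _) ?_
  refine Finset.sup_le fun j hj => ?_
  refine le_trans (totalDegree_mul _ _) ?_
  have h1 : ((MvPolynomial.C t : MvPolynomial (Fin d) ℝ) ^ j).totalDegree = 0 := by
    rw [← map_pow, totalDegree_C]
  rw [h1, add_zero]
  exact le_trans (le_add_right le_rfl)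
    (totalDegree_coeff_finSuccEquiv_add_le P j (Polynomial.mem_support_iff.mp hj))
noncomputable def remezCube (d : ℕ) (x₀ : Fin d → ℝ) (ρ : ℝ) : Set (Fin d → ℝ) :=
  Set.univ.pi fun i => Icc (x₀ i - ρ) (x₀ i + ρ)

lemma remezCube_volume (d : ℕ) (x₀ : Fin d → ℝ) (ρ : ℝ) (hρ : 0 ≤ ρ) :
    volume (remezCube d x₀ ρ) = (ENNReal.ofReal (2 * ρ)) ^ d := by
  rw [remezCube, volume_pi_pi]
  simp only [Real.volume_Icc]
  have : ∀ i : Fin d, ENNReal.ofReal (x₀ i + ρ - (x₀ i - ρ)) = ENNReal.ofReal (2 * ρ) := by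
    intro i; congr 1; ring
  rw [Finset.prod_congr rfl (fun i _ => this i), Finset.prod_const, Finset.card_univ,
    Fintype.card_fin]

lemma remezCube_measurableSet (d : ℕ) (x₀ : Fin d → ℝ) (ρ : ℝ) :
    MeasurableSet (remezCube d x₀ ρ) :=
  MeasurableSet.univ_pi fun _ => measurableSet_Icc

lemma remez_mem_cube_cons (d : ℕ) (x₀ : Fin (d+1) → ℝ) (ρ : ℝ) (t : ℝ) (y : Fin d → ℝ) :
    Fin.cons t y ∈ remezCube (d+1) x₀ ρ ↔
      t ∈ Icc (x₀ 0 - ρ) (x₀ 0 + ρ) ∧ y ∈ remezCube d (Fin.tail x₀) ρ := by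
  simp only [remezCube, Set.mem_pi, Set.mem_univ, forall_true_left]
  constructor
  · intro h
    exact ⟨h 0, fun j => h j.succ⟩
  · rintro ⟨h0, h1⟩ i
    refine Fin.cases ?_ ?_ i
    · exact h0
    · intro j; exact h1 j

/-- A nonzero multivariate polynomial does not vanish identically on any open cube. -/
lemma remez_exists_ne_zero (d : ℕ) (P : MvPolynomial (Fin d) ℝ) (hP : P ≠ 0)
    (x₀ : Fin d → ℝ) (ρ : ℝ) (hρ : 0 < ρ) :
    ∃ x : Fin d → ℝ, (∀ i, x i ∈ Ioo (x₀ i - ρ) (x₀ i + ρ)) ∧ eval x P ≠ 0 := by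
  induction d with
  | zero =>
      refine ⟨x₀, fun i => i.elim0, ?_⟩
      have : P = MvPolynomial.C (MvPolynomial.constantCoeff P) := by
        apply MvPolynomial.eq_C_of_isEmpty
      rw [this] at hP ⊢
      simpa using fun h => hP (by rw [h]; simp)
  | succ d ih =>
      set q := finSuccEquiv ℝ d P with hq
      have hq0 : q ≠ 0 := by
        intro h
        exact hP (by simpa using (map_eq_zero_iff _ (AlgEquiv.injective _)).mp (hq ▸ h))
      obtain ⟨j, hj⟩ : ∃ j, q.coeff j ≠ 0 := by
        by_contra h
        push_neg at h
        exact hq0 (Polynomial.ext fun n => by simp [h n])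
      obtain ⟨y, hy, hyne⟩ := ih (q.coeff j) hj (Fin.tail x₀) 
      have hqy : (q.map (eval y)) ≠ 0 := by
        intro h
        apply hyne
        have := congrArg (fun p => Polynomial.coeff p j) h
        simpa [Polynomial.coeff_map] using this
      have hroots : {t : ℝ | (q.map (eval y)).IsRoot t}.Finite :=
        Polynomial.finite_setOf_isRoot hqy
      have hIoo : (Ioo (x₀ 0 - ρ) (x₀ 0 + ρ)).Infinite := by
        exact Set.Ioo_infinite (by linarith)
      obtain ⟨t, ht, htroot⟩ := (hIoo.diff hroots).nonempty
      refine ⟨Fin.cons t y, ?_, ?_⟩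
      · intro i
        refine Fin.cases ?_ ?_ i
        · simpa using ht
        · intro i; simpa [Fin.tail] using hy i
      · rw [eval_eq_eval_mv_eval']
        exact fun h => htroot h
lemma remez_oneD (k : ℕ) (hk : 1 ≤ k) (q : Polynomial ℝ) (hq : q.natDegree ≤ k)
    (a b : ℝ) (hab : a ≤ b) (M ε : ℝ) (hM : 0 < M)
    (hw : ∃ t ∈ Icc a b, M ≤ |q.eval t|) (hε : 0 < ε) :
    volume {t : ℝ | t ∈ Icc a b ∧ |q.eval t| < ε} ≤
      ENNReal.ofReal (((k : ℝ) + 1) ^ 2 * (ε / M) ^ ((1:ℝ)/k) * (b - a)) := by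
  have hk0 : (k : ℝ) ≠ 0 := Nat.cast_ne_zero.mpr (by omega)
  have hkpos : (0:ℝ) < k := Nat.cast_pos.mpr (by omega)
  set E : Set ℝ := {t : ℝ | t ∈ Icc a b ∧ |q.eval t| < ε} with hE
  have hEsub : E ⊆ Icc a b := fun t ht => ht.1
  have hEmeas : MeasurableSet E := by
    apply MeasurableSet.inter measurableSet_Icc
    exact measurableSet_lt ((continuous_abs.comp q.continuous).measurable) measurable_const
  have hEvol : volume E ≤ ENNReal.ofReal (b - a) := by
    refine le_trans (measure_mono hEsub) ?_
    rw [Real.volume_Icc]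
  have hfin : volume E ≠ ⊤ := ne_top_of_le_ne_top ENNReal.ofReal_ne_top hEvol
  set m := (volume E).toReal with hm
  have hvolE : volume E = ENNReal.ofReal m := (ENNReal.ofReal_toReal hfin).symm
  have hm0 : 0 ≤ m := ENNReal.toReal_nonneg
  have hrpow0 : (0:ℝ) ≤ (ε / M) ^ ((1:ℝ)/k) :=
    Real.rpow_nonneg (le_of_lt (div_pos hε hM)) _
  have hba : (0:ℝ) ≤ b - a := sub_nonneg.mpr hab
  suffices hmain : m ≤ ((k : ℝ) + 1) ^ 2 * (ε / M) ^ ((1:ℝ)/k) * (b - a) by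
    rw [hvolE]; exact ENNReal.ofReal_le_ofReal hmain
  rcases eq_or_lt_of_le hm0 with hmz | hmpos
  · rw [← hmz]; positivity
  -- main case
  set δ := m / ((k:ℝ) + 1) with hδdef
  have hδ : 0 < δ := div_pos hmpos (by positivity)
  have hmδ : ((k:ℝ) + 1) * δ = m := by rw [hδdef]; field_simp
  set F : ℝ → ℝ := fun t => (volume (E ∩ Iic t)).toReal with hF
  have hEfin : ∀ t, volume (E ∩ Iic t) ≠ ⊤ :=
    fun t => ne_top_of_le_ne_top hfin (measure_mono inter_subset_left)
  have hFmono : Monotone F := by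
    intro s t hst
    exact ENNReal.toReal_mono (hEfin t)
      (measure_mono (inter_subset_inter_right _ (Iic_subset_Iic.mpr hst)))
  have hFadd : ∀ s t : ℝ, s ≤ t → F t = F s + (volume (E ∩ Ioc s t)).toReal := by
    intro s t hst
    have hsplit : E ∩ Iic t = (E ∩ Iic s) ∪ (E ∩ Ioc s t) := by
      rw [← inter_union_distrib_left, Iic_union_Ioc_eq_Iic hst]
    have hdisj : Disjoint (E ∩ Iic s) (E ∩ Ioc s t) := by
      apply Set.disjoint_left.mpr
      rintro x ⟨-, hx1⟩ ⟨-, hx2⟩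
      exact absurd hx2.1 (not_lt.mpr hx1)
    rw [hF]
    simp only
    rw [hsplit, measure_union hdisj (hEmeas.inter measurableSet_Ioc),
      ENNReal.toReal_add (ne_top_of_le_ne_top hfin (measure_mono inter_subset_left))
        (ne_top_of_le_ne_top hfin (measure_mono inter_subset_left))]
  have hFlip : ∀ s t : ℝ, s ≤ t → F t - F s ≤ t - s := by
    intro s t hst
    rw [hFadd s t hst]
    have h1 : volume (E ∩ Ioc s t) ≤ ENNReal.ofReal (t - s) := by
      refine le_trans (measure_mono inter_subset_right) ?_
      rw [Real.volume_Ioc]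
    have h2 := ENNReal.toReal_mono ENNReal.ofReal_ne_top h1
    rw [ENNReal.toReal_ofReal (by linarith)] at h2
    linarith
  have hFcont : Continuous F := by
    refine LipschitzWith.continuous (K := 1) (LipschitzWith.of_dist_le_mul ?_)
    intro s t
    rw [Real.dist_eq, Real.dist_eq, NNReal.coe_one, one_mul]
    rcases le_total s t with h | h
    · rw [abs_of_nonpos (by linarith [hFmono h] : F s - F t ≤ 0),
        abs_of_nonpos (by linarith : s - t ≤ 0)]
      linarith [hFlip s t h]
    · rw [abs_of_nonneg (by linarith [hFmono h] : 0 ≤ F s - F t),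
        abs_of_nonneg (by linarith : 0 ≤ s - t)]
      linarith [hFlip t s h]
  have hFa : F a = 0 := by
    have hsub1 : E ∩ Iic a ⊆ {a} := by
      rintro x ⟨hx1, hx2⟩
      exact le_antisymm hx2 hx1.1.1
    have h0 : volume (E ∩ Iic a) = 0 := measure_mono_null hsub1 Real.volume_singleton
    rw [hF]; simp only [h0, ENNReal.toReal_zero]
  have hFb : F b = m := by
    have heq : E ∩ Iic b = E := inter_eq_left.mpr fun x hx => hx.1.2
    rw [hF]; simp only [heq, hm]
  -- nodes
  have hnode : ∀ j : Fin (k + 1), ∃ xj, xj ∈ closure E ∧ F xj = (((j:ℕ) : ℝ) + 1) * δ := by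
    intro j
    have hjk : ((j : ℕ) : ℝ) + 1 ≤ (k : ℝ) + 1 := by
      have := Nat.lt_succ_iff.mp j.isLt
      push_cast
      exact_mod_cast Nat.add_le_add_right this 1
    have hsmem : (((j:ℕ) : ℝ) + 1) * δ ∈ Icc (F a) (F b) := by
      rw [hFa, hFb]
      constructor
      · positivity
      · rw [← hmδ]
        exact mul_le_mul_of_nonneg_right hjk (le_of_lt hδ)
    obtain ⟨c, hc, hFc⟩ := intermediate_value_Icc hab hFcont.continuousOn hsmem
    set S := E ∩ Iic c with hS
    have hSvol : volume S ≠ 0 := by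
      intro h0
      rw [hF] at hFc
      simp only [← hS, h0, ENNReal.toReal_zero] at hFc
      nlinarith [hδ]
    have hSne : S.Nonempty := nonempty_of_measure_ne_zero hSvol
    have hSbdd : BddAbove S := ⟨c, fun x hx => hx.2⟩
    refine ⟨sSup S, closure_mono inter_subset_left (csSup_mem_closure hSne hSbdd), ?_⟩
    refine le_antisymm ?_ ?_
    · rw [← hFc]
      exact hFmono (csSup_le hSne fun x hx => hx.2)
    · have hsub : S ⊆ E ∩ Iic (sSup S) := fun x hx => ⟨hx.1, le_csSup hSbdd hx⟩
      have h2 := ENNReal.toReal_mono (hEfin (sSup S)) (measure_mono hsub)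
      rw [← hFc]
      exact h2
  choose x hxcl hxF using hnode
  have hxIcc : ∀ j, x j ∈ Icc a b := fun j => closure_minimal hEsub isClosed_Icc (hxcl j)
  have hxε : ∀ j, |q.eval (x j)| ≤ ε := by
    intro j
    have hcl : closure E ⊆ {t : ℝ | |q.eval t| ≤ ε} :=
      closure_minimal (fun t ht => le_of_lt ht.2) (isClosed_le (by fun_prop) continuous_const)
    exact hcl (hxcl j)
  have hmono : ∀ i j : Fin (k+1), i < j → x i + δ ≤ x j := by
    intro i j hij
    have hcast : ((i:ℕ):ℝ) + 1 ≤ ((j:ℕ):ℝ) := by exact_mod_cast Fin.lt_def.mp hij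
    have hFij : δ ≤ F (x j) - F (x i) := by
      rw [hxF i, hxF j]
      nlinarith [hδ]
    have hxij : x i ≤ x j := by
      by_contra hcon
      push_neg at hcon
      have := hFmono (le_of_lt hcon)
      linarith
    have := hFlip (x i) (x j) hxij
    linarith
  have hsep : ∀ i j : Fin (k+1), i ≠ j → δ ≤ |x i - x j| := by
    intro i j hij
    rcases lt_or_gt_of_ne hij with h | h
    · have := hmono i j h
      rw [abs_sub_comm, abs_of_nonneg (by linarith)]
      linarith
    · have := hmono j i h
      rw [abs_of_nonneg (by linarith)]
      linarith
  have hinj : Set.InjOn x ((Finset.univ : Finset (Fin (k+1))) : Set (Fin (k+1))) := by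
    intro i _ j _ hxij
    by_contra hne
    have := hsep i j hne
    rw [hxij, sub_self, abs_zero] at this
    linarith
  have hdeg : q.degree < ((Finset.univ : Finset (Fin (k+1))).card : WithBot ℕ) := by
    refine lt_of_le_of_lt Polynomial.degree_le_natDegree ?_
    rw [Finset.card_univ, Fintype.card_fin]
    exact_mod_cast Nat.lt_succ_of_le hq
  have hq_eq := Lagrange.eq_interpolate (v := x) hinj hdeg
  obtain ⟨t₀, ht₀, hMt₀⟩ := hw
  have hbasis : ∀ i : Fin (k+1),
      |Polynomial.eval t₀ (Lagrange.basis Finset.univ x i)| ≤ ((b-a)/δ)^k := by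
    intro i
    rw [Lagrange.basis, Polynomial.eval_prod, Finset.abs_prod]
    have hcard : (Finset.univ.erase i).card = k := by
      rw [Finset.card_erase_of_mem (Finset.mem_univ i), Finset.card_univ, Fintype.card_fin]
      omega
    calc ∏ j ∈ Finset.univ.erase i, |Polynomial.eval t₀ (Lagrange.basisDivisor (x i) (x j))|
        ≤ ∏ _j ∈ Finset.univ.erase i, ((b-a)/δ) := ?_
      _ = ((b-a)/δ)^k := by rw [Finset.prod_const, hcard]
    refine Finset.prod_le_prod (fun j _ => abs_nonneg _) (fun j hj => ?_)
    · have hji : j ≠ i := Finset.ne_of_mem_erase hj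
      rw [Lagrange.basisDivisor, Polynomial.eval_mul, Polynomial.eval_C, Polynomial.eval_sub,
        Polynomial.eval_X, Polynomial.eval_C, abs_mul, abs_inv]
      have h1 : δ ≤ |x i - x j| := hsep i j (Ne.symm hji)
      have h2 : |t₀ - x j| ≤ b - a := by
        have h3 := hxIcc j
        rw [abs_le]
        constructor
        · linarith [h3.2, ht₀.1]
        · linarith [h3.1, ht₀.2]
      calc |x i - x j|⁻¹ * |t₀ - x j| ≤ δ⁻¹ * (b - a) := by
            refine mul_le_mul ?_ h2 (abs_nonneg _) (by positivity)
            exact inv_anti₀ hδ h1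
        _ = (b - a)/δ := by rw [div_eq_mul_inv]; ring
  have hMle : M ≤ ((k:ℝ) + 1) * ε * ((b - a)/δ)^k := by
    have heval : q.eval t₀ = ∑ i : Fin (k+1),
        q.eval (x i) * Polynomial.eval t₀ (Lagrange.basis Finset.univ x i) := by
      conv_lhs => rw [hq_eq]
      rw [Lagrange.interpolate_apply, Polynomial.eval_finset_sum]
      refine Finset.sum_congr rfl fun i _ => ?_
      rw [Polynomial.eval_mul, Polynomial.eval_C]
    calc M ≤ |q.eval t₀| := hMt₀
      _ ≤ ∑ i : Fin (k+1), |q.eval (x i)| *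
            |Polynomial.eval t₀ (Lagrange.basis Finset.univ x i)| := by
          rw [heval]
          refine le_trans (Finset.abs_sum_le_sum_abs _ _) ?_
          simp [abs_mul]
      _ ≤ ∑ _i : Fin (k+1), ε * ((b-a)/δ)^k := by
          refine Finset.sum_le_sum fun i _ => ?_
          exact mul_le_mul (hxε i) (hbasis i) (abs_nonneg _) (le_of_lt hε)
      _ = ((k:ℝ)+1) * ε * ((b-a)/δ)^k := by
          rw [Finset.sum_const, Finset.card_univ, Fintype.card_fin, nsmul_eq_mul]
          push_cast
          ring
  have hMδk : M * δ^k ≤ ((k:ℝ)+1) * ε * (b-a)^k := by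
    have h2 : ((b-a)/δ)^k = (b-a)^k / δ^k := div_pow _ _ _
    rw [h2] at hMle
    have hδk : (0:ℝ) < δ^k := by positivity
    calc M * δ^k ≤ (((k:ℝ)+1) * ε * ((b-a)^k/δ^k)) * δ^k :=
          mul_le_mul_of_nonneg_right hMle (le_of_lt hδk)
      _ = ((k:ℝ)+1)*ε*(b-a)^k := by field_simp
  have hmk : m ^ k ≤ ((k:ℝ)+1)^(k+1) * (ε/M) * (b-a)^k := by
    have hδe : δ^k = m^k / ((k:ℝ)+1)^k := by rw [hδdef, div_pow]
    rw [hδe] at hMδk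
    have hk1 : (0:ℝ) < ((k:ℝ)+1)^k := by positivity
    have hMk : M * m^k ≤ ((k:ℝ)+1)^(k+1)*ε*(b-a)^k := by
      calc M * m^k = M * (m^k/((k:ℝ)+1)^k) * ((k:ℝ)+1)^k := by field_simp
        _ ≤ (((k:ℝ)+1)*ε*(b-a)^k) * ((k:ℝ)+1)^k :=
            mul_le_mul_of_nonneg_right hMδk (le_of_lt hk1)
        _ = ((k:ℝ)+1)^(k+1)*ε*(b-a)^k := by ring
    calc m^k = (M * m^k)/M := by field_simp
      _ ≤ (((k:ℝ)+1)^(k+1)*ε*(b-a)^k)/M := by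
          exact (div_le_div_iff_of_pos_right hM).mpr hMk
      _ = ((k:ℝ)+1)^(k+1)*(ε/M)*(b-a)^k := by ring
  -- take k-th root
  have hexp0 : (0:ℝ) ≤ 1/(k:ℝ) := by positivity
  have hrpow := Real.rpow_le_rpow (by positivity) hmk hexp0
  have hlhs : ((m:ℝ)^k) ^ ((1:ℝ)/k) = m := by
    rw [← Real.rpow_natCast m k, ← Real.rpow_mul hm0, mul_one_div, div_self hk0, Real.rpow_one]
  have hba_eq : ((b-a)^k) ^ ((1:ℝ)/k) = b - a := by
    rw [← Real.rpow_natCast (b-a) k, ← Real.rpow_mul hba, mul_one_div, div_self hk0,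
      Real.rpow_one]
  have hrhs : (((k:ℝ)+1)^(k+1) * (ε/M) * (b-a)^k) ^ ((1:ℝ)/k) ≤
      ((k:ℝ)+1)^2 * (ε/M)^((1:ℝ)/k) * (b-a) := by
    rw [Real.mul_rpow (by positivity) (by positivity),
      Real.mul_rpow (by positivity) (le_of_lt (div_pos hε hM)), hba_eq]
    have h1 : (((k:ℝ)+1)^(k+1)) ^ ((1:ℝ)/k) ≤ ((k:ℝ)+1)^2 := by
      rw [← Real.rpow_natCast ((k:ℝ)+1) (k+1), ← Real.rpow_mul (by positivity),
        ← Real.rpow_natCast ((k:ℝ)+1) 2]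
      refine Real.rpow_le_rpow_of_exponent_le (by linarith [hkpos]) ?_
      push_cast
      rw [mul_one_div, div_le_iff₀ hkpos]
      have hk1' : (1:ℝ) ≤ k := Nat.one_le_cast.mpr hk
      linarith
    refine mul_le_mul_of_nonneg_right (mul_le_mul_of_nonneg_right h1 hrpow0) hba
  calc m = ((m:ℝ)^k) ^ ((1:ℝ)/k) := hlhs.symm
    _ ≤ (((k:ℝ)+1)^(k+1) * (ε/M) * (b-a)^k) ^ ((1:ℝ)/k) := hrpow
    _ ≤ ((k:ℝ)+1)^2 * (ε/M)^((1:ℝ)/k) * (b-a) := hrhs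
lemma remez_step (d k : ℕ) (hk : 1 ≤ k) (P : MvPolynomial (Fin (d+1)) ℝ)
    (hdeg : P.totalDegree ≤ k) (x₀ : Fin (d+1) → ℝ) (ρ : ℝ) (hρ : 0 < ρ)
    (ε η : ℝ) (hε : 0 < ε) (hη : 0 < η) (t₀ : ℝ)
    (ht₀ : t₀ ∈ Icc (x₀ 0 - ρ) (x₀ 0 + ρ)) :
    volume {x : Fin (d+1) → ℝ | x ∈ remezCube (d+1) x₀ ρ ∧ |eval x P| < ε} ≤
      volume {y : Fin d → ℝ | y ∈ remezCube d (Fin.tail x₀) ρ ∧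
          |eval y (remezSlice d P t₀)| < η} * ENNReal.ofReal (2*ρ)
        + ENNReal.ofReal (((k:ℝ)+1)^2 * (ε/η) ^ ((1:ℝ)/k) * (2*ρ)) *
            volume (remezCube d (Fin.tail x₀) ρ) := by
  set A : Set (Fin (d+1) → ℝ) :=
    {x : Fin (d+1) → ℝ | x ∈ remezCube (d+1) x₀ ρ ∧ |eval x P| < ε} with hAdef
  have hA : MeasurableSet A := by
    refine MeasurableSet.inter (remezCube_measurableSet _ _ _) ?_
    exact measurableSet_lt (continuous_abs.comp (MvPolynomial.continuous_eval
      (p := P))).measurable measurable_const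
  set e := MeasurableEquiv.piFinSuccAbove (fun _ : Fin (d+1) => ℝ) 0 with hedef
  have hmp := measurePreserving_piFinSuccAbove (fun _ : Fin (d+1) => (volume : Measure ℝ)) 0
  set s : Set (ℝ × (Fin d → ℝ)) := e.symm ⁻¹' A with hsdef
  have hs : MeasurableSet s := e.symm.measurable hA
  have hsymm : ∀ (t : ℝ) (y : Fin d → ℝ), e.symm (t, y) = Fin.cons t y := by
    intro t y
    show (Fin.insertNthEquiv (fun _ : Fin (d+1) => ℝ) 0) (t, y) = Fin.cons t y
    simp [Fin.insertNthEquiv, Fin.insertNth_zero']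
  have h1 : volume A = ((volume : Measure ℝ).prod
      (Measure.pi fun _ : Fin d => (volume : Measure ℝ))) s := by
    have h2 := hmp.measure_preimage (hs.nullMeasurableSet)
    have h3 : e ⁻¹' s = A := by
      rw [hsdef, ← Set.preimage_comp]
      simp
    rw [← h3]
    rw [show (volume : Measure (Fin (d+1) → ℝ)) = Measure.pi fun _ => volume from volume_pi]
    exact h2
  have h2 : ((volume : Measure ℝ).prod
      (Measure.pi fun _ : Fin d => (volume : Measure ℝ))) s
      = ∫⁻ y, volume {t : ℝ | (t, y) ∈ s} ∂(Measure.pi fun _ : Fin d => volume) := by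
    rw [Measure.prod_apply_symm hs]
    rfl
  have hsec : ∀ y : Fin d → ℝ, {t : ℝ | (t, y) ∈ s} = {t : ℝ | Fin.cons t y ∈ A} := by
    intro y
    ext t
    simp only [hsdef, Set.mem_preimage, Set.mem_setOf_eq, hsymm]
  set Q' := remezCube d (Fin.tail x₀) ρ with hQ'def
  have hQ'meas : MeasurableSet Q' := remezCube_measurableSet _ _ _
  set Z : Set (Fin d → ℝ) :=
    {y : Fin d → ℝ | y ∈ Q' ∧ |eval y (remezSlice d P t₀)| < η} with hZdef
  have hZ : MeasurableSet Z := by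
    refine MeasurableSet.inter hQ'meas ?_
    exact measurableSet_lt (continuous_abs.comp (MvPolynomial.continuous_eval
      (p := remezSlice d P t₀))).measurable measurable_const
  set c2 : ℝ≥0∞ := ENNReal.ofReal (((k:ℝ)+1)^2 * (ε/η) ^ ((1:ℝ)/k) * (2*ρ)) with hc2def
  set g : (Fin d → ℝ) → ℝ≥0∞ :=
    fun y => Z.indicator (fun _ => ENNReal.ofReal (2*ρ)) y
      + Q'.indicator (fun _ => c2) y with hgdef
  have hIcc2ρ : ENNReal.ofReal ((x₀ 0 + ρ) - (x₀ 0 - ρ)) = ENNReal.ofReal (2*ρ) := by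
    congr 1; ring
  have hbound : ∀ y : Fin d → ℝ, volume {t : ℝ | (t, y) ∈ s} ≤ g y := by
    intro y
    rw [hsec]
    by_cases hyQ : y ∈ Q'
    · by_cases hyZ : y ∈ Z
      · have hsub : {t : ℝ | Fin.cons t y ∈ A} ⊆ Icc (x₀ 0 - ρ) (x₀ 0 + ρ) := by
          intro t ht
          exact ((remez_mem_cube_cons d x₀ ρ t y).mp ht.1).1
        refine le_trans (measure_mono hsub) ?_
        rw [Real.volume_Icc, hIcc2ρ]
        rw [hgdef]
        simp only [Set.indicator_of_mem hyZ]
        exact le_self_add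
      · have hyη : η ≤ |eval y (remezSlice d P t₀)| := by
          by_contra hcon
          push_neg at hcon
          exact hyZ ⟨hyQ, hcon⟩
        set qy : Polynomial ℝ :=
          Polynomial.map (MvPolynomial.eval y) (finSuccEquiv ℝ d P) with hqydef
        have hqdeg : qy.natDegree ≤ k := by
          refine le_trans Polynomial.natDegree_map_le ?_
          rw [natDegree_finSuccEquiv]
          exact le_trans (degreeOf_le_totalDegree P 0) hdeg
        have hqeval : ∀ t : ℝ, qy.eval t = eval (Fin.cons t y) P := by
          intro t
          rw [eval_eq_eval_mv_eval']
        have hsub : {t : ℝ | Fin.cons t y ∈ A} ⊆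
            {t : ℝ | t ∈ Icc (x₀ 0 - ρ) (x₀ 0 + ρ) ∧ |qy.eval t| < ε} := by
          intro t ht
          refine ⟨((remez_mem_cube_cons d x₀ ρ t y).mp ht.1).1, ?_⟩
          rw [hqeval]
          exact ht.2
        have hwit : ∃ t ∈ Icc (x₀ 0 - ρ) (x₀ 0 + ρ), η ≤ |qy.eval t| := by
          refine ⟨t₀, ht₀, ?_⟩
          rw [hqeval, ← remez_eval_slice]
          exact hyη
        have h1d := remez_oneD k hk qy hqdeg (x₀ 0 - ρ) (x₀ 0 + ρ) (by linarith)
          η ε hη hwit hε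
        refine le_trans (measure_mono hsub) (le_trans h1d ?_)
        have heq : (x₀ 0 + ρ) - (x₀ 0 - ρ) = 2*ρ := by ring
        rw [heq]
        rw [hgdef]
        simp only [Set.indicator_of_notMem hyZ, Set.indicator_of_mem hyQ, zero_add]
        exact le_rfl
    · have hempty : {t : ℝ | Fin.cons t y ∈ A} = ∅ := by
        ext t
        simp only [Set.mem_setOf_eq, Set.mem_empty_iff_false, iff_false]
        intro ht
        exact hyQ ((remez_mem_cube_cons d x₀ ρ t y).mp ht.1).2
      rw [hempty]
      simp
  calc volume A = ∫⁻ y, volume {t : ℝ | (t, y) ∈ s}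
        ∂(Measure.pi fun _ : Fin d => volume) := by rw [h1, h2]
    _ ≤ ∫⁻ y, g y ∂(Measure.pi fun _ : Fin d => volume) := lintegral_mono hbound
    _ = volume Z * ENNReal.ofReal (2*ρ) + c2 * volume Q' := by
        rw [hgdef]
        rw [lintegral_add_left (Measurable.indicator measurable_const hZ)]
        rw [lintegral_indicator hZ, lintegral_indicator hQ'meas,
          setLIntegral_const, setLIntegral_const]
        rw [show (Measure.pi fun _ : Fin d => (volume : Measure ℝ)) = volume from volume_pi.symm]
        rw [mul_comm]
lemma remez_cube (k : ℕ) (hk : 1 ≤ k) : ∀ d : ℕ, 1 ≤ d → ∃ C : ℝ, 1 ≤ C ∧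
    ∀ (P : MvPolynomial (Fin d) ℝ), P.totalDegree ≤ k →
    ∀ (x₀ : Fin d → ℝ) (ρ : ℝ), 0 < ρ → ∀ (M ε : ℝ), 0 < M → 0 < ε →
    (∃ x ∈ remezCube d x₀ ρ, M ≤ |eval x P|) →
    volume {x : Fin d → ℝ | x ∈ remezCube d x₀ ρ ∧ |eval x P| < ε} ≤
      ENNReal.ofReal (C * (ε/M) ^ ((1:ℝ)/(d*k))) * volume (remezCube d x₀ ρ) := by
  have hkR : (0:ℝ) < k := Nat.cast_pos.mpr (by omega)
  refine Nat.le_induction ?_ ?_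
  · -- base case d = 1
    refine ⟨((k:ℝ)+1)^2, by nlinarith, ?_⟩
    intro P hdeg x₀ ρ hρ M ε hM hε ⟨xw, hxwQ, hxwM⟩
    set t₀ := xw 0 with ht₀def
    have ht₀ : t₀ ∈ Icc (x₀ 0 - ρ) (x₀ 0 + ρ) := (Set.mem_univ_pi.mp hxwQ) 0
    have hstep := remez_step 0 k hk P hdeg x₀ ρ hρ ε M hε hM t₀ ht₀
    have hZempty : {y : Fin 0 → ℝ | y ∈ remezCube 0 (Fin.tail x₀) ρ ∧
        |eval y (remezSlice 0 P t₀)| < M} = ∅ := by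
      ext y
      simp only [Set.mem_setOf_eq, Set.mem_empty_iff_false, iff_false, not_and, not_lt]
      intro hy
      have hy' : y = Fin.tail xw := Subsingleton.elim _ _
      rw [hy', remez_eval_slice, Fin.cons_self_tail]
      exact hxwM
    rw [hZempty] at hstep
    simp only [measure_empty, zero_mul, zero_add] at hstep
    have hQ0 : volume (remezCube 0 (Fin.tail x₀) ρ) = 1 := by
      rw [remezCube_volume 0 _ _ (le_of_lt hρ), pow_zero]
    rw [hQ0, mul_one] at hstep
    refine le_trans hstep ?_
    have hQ1 : volume (remezCube 1 x₀ ρ) = ENNReal.ofReal (2*ρ) := by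
      rw [remezCube_volume 1 _ _ (le_of_lt hρ), pow_one]
    rw [hQ1, ← ENNReal.ofReal_mul (by positivity)]
    apply ENNReal.ofReal_le_ofReal
    rw [Nat.cast_one, one_mul]
  · -- induction step
    rintro d hd ⟨C, hC1, hC⟩
    refine ⟨C + ((k:ℝ)+1)^2, by nlinarith, ?_⟩
    intro P hdeg x₀ ρ hρ M ε hM hε ⟨xw, hxwQ, hxwM⟩
    have hdR : (0:ℝ) < d := Nat.cast_pos.mpr (by omega)
    set r := ε / M with hrdef
    have hr : 0 < r := div_pos hε hM
    set η := M * r ^ ((d:ℝ)/((d:ℝ)+1)) with hηdef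
    have hη : 0 < η := by positivity
    set t₀ := xw 0 with ht₀def
    have ht₀ : t₀ ∈ Icc (x₀ 0 - ρ) (x₀ 0 + ρ) := (Set.mem_univ_pi.mp hxwQ) 0
    have hstep := remez_step d k hk P hdeg x₀ ρ hρ ε η hε hη t₀ ht₀
    -- apply IH to the slice
    set P' := remezSlice d P t₀ with hP'def
    have hdeg' : P'.totalDegree ≤ k := le_trans (remez_totalDegree_slice d P t₀) hdeg
    have hwit' : ∃ y ∈ remezCube d (Fin.tail x₀) ρ, M ≤ |eval y P'| := by
      refine ⟨Fin.tail xw, ?_, ?_⟩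
      · exact Set.mem_univ_pi.mpr (fun j => (Set.mem_univ_pi.mp hxwQ) j.succ)
      · rw [hP'def, remez_eval_slice, Fin.cons_self_tail]
        exact hxwM
    have hIH := hC P' hdeg' (Fin.tail x₀) ρ hρ M η hM hη hwit'
    -- exponent computations
    set βt := (1:ℝ)/(((d:ℝ)+1)*k) with hβtdef
    have hkR0 : (k:ℝ) ≠ 0 := ne_of_gt hkR
    have hdR0 : (d:ℝ) ≠ 0 := ne_of_gt hdR
    have hd1 : (d:ℝ) + 1 ≠ 0 := by positivity
    have hβ1 : (η/M) ^ ((1:ℝ)/(d*k)) = r ^ βt := by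
      have h1 : η/M = r ^ ((d:ℝ)/((d:ℝ)+1)) := by
        rw [hηdef]; field_simp
      rw [h1, ← Real.rpow_mul (le_of_lt hr)]
      congr 1
      rw [hβtdef]
      field_simp
    have hβ2 : (ε/η) ^ ((1:ℝ)/k) = r ^ βt := by
      have h2 : ε/η = r ^ ((1:ℝ) - (d:ℝ)/((d:ℝ)+1)) := by
        rw [Real.rpow_sub hr, Real.rpow_one, hηdef, hrdef]
        field_simp
      rw [h2, ← Real.rpow_mul (le_of_lt hr)]
      congr 1
      rw [hβtdef]
      field_simp
      ring
    -- put things together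
    rw [hβ1] at hIH
    rw [hβ2] at hstep
    set V := ENNReal.ofReal (2*ρ) with hVdef
    have hQ'vol : volume (remezCube d (Fin.tail x₀) ρ) = V ^ d :=
      remezCube_volume d _ _ (le_of_lt hρ)
    have hQvol : volume (remezCube (d+1) x₀ ρ) = V ^ (d+1) :=
      remezCube_volume (d+1) _ _ (le_of_lt hρ)
    have hrβ0 : (0:ℝ) ≤ r ^ βt := Real.rpow_nonneg (le_of_lt hr) _
    have hβeq : (1:ℝ)/((↑(d+1):ℝ)*↑k) = βt := by rw [hβtdef]; push_cast; ring
    calc volume {x : Fin (d+1) → ℝ | x ∈ remezCube (d+1) x₀ ρ ∧ |eval x P| < ε}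
        ≤ volume {y : Fin d → ℝ | y ∈ remezCube d (Fin.tail x₀) ρ ∧
            |eval y P'| < η} * V
          + ENNReal.ofReal (((k:ℝ)+1)^2 * r ^ βt * (2*ρ)) *
              volume (remezCube d (Fin.tail x₀) ρ) := hstep
      _ ≤ (ENNReal.ofReal (C * r ^ βt) * V ^ d) * V
          + ENNReal.ofReal (((k:ℝ)+1)^2 * r ^ βt * (2*ρ)) * V ^ d := by
          rw [hQ'vol] at hIH ⊢
          exact add_le_add_left (mul_le_mul_left hIH V) _
      _ = (ENNReal.ofReal (C * r ^ βt) + ENNReal.ofReal (((k:ℝ)+1)^2 * r ^ βt)) *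
            V ^ (d+1) := by
          rw [ENNReal.ofReal_mul (by positivity : (0:ℝ) ≤ ((k:ℝ)+1)^2 * r ^ βt), hVdef]
          ring
      _ = ENNReal.ofReal ((C + ((k:ℝ)+1)^2) * r ^ βt) * V ^ (d+1) := by
          rw [← ENNReal.ofReal_add (by positivity) (by positivity)]
          congr 2
          ring
      _ = ENNReal.ofReal ((C + ((k:ℝ)+1)^2) * (ε/M) ^ ((1:ℝ)/(↑(d+1)*↑k))) *
            volume (remezCube (d+1) x₀ ρ) := by
          rw [hQvol, ← hrdef, hβeq]
lemma remez_coord_le {d : ℕ} (x y : EuclideanSpace ℝ (Fin d)) (i : Fin d) :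
    |x i - y i| ≤ dist x y := by
  rw [EuclideanSpace.dist_eq, ← Real.sqrt_sq_eq_abs]
  apply Real.sqrt_le_sqrt
  have h := Finset.single_le_sum (f := fun j => dist (x j) (y j) ^ 2)
    (fun j _ => sq_nonneg _) (Finset.mem_univ i)
  simpa [Real.dist_eq] using h

lemma remez_dist_le {d : ℕ} (x y : EuclideanSpace ℝ (Fin d)) (ρ' : ℝ) (hρ' : 0 ≤ ρ')
    (h : ∀ i, |x i - y i| ≤ ρ') : dist x y ≤ Real.sqrt d * ρ' := by
  rw [EuclideanSpace.dist_eq]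
  have h1 : ∑ i, dist (x i) (y i) ^ 2 ≤ (d : ℝ) * ρ' ^ 2 := by
    calc ∑ i, dist (x i) (y i) ^ 2 ≤ ∑ _i : Fin d, ρ' ^ 2 := by
          refine Finset.sum_le_sum fun i _ => ?_
          rw [Real.dist_eq]
          exact sq_le_sq' (by linarith [abs_nonneg (x i - y i)]) (h i)
      _ = (d : ℝ) * ρ' ^ 2 := by
          rw [Finset.sum_const, Finset.card_univ, Fintype.card_fin, nsmul_eq_mul]
    
  calc Real.sqrt (∑ i, dist (x i) (y i) ^ 2) ≤ Real.sqrt ((d:ℝ) * ρ' ^ 2) :=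
        Real.sqrt_le_sqrt h1
    _ = Real.sqrt d * ρ' := by
        rw [Real.sqrt_mul (Nat.cast_nonneg d), Real.sqrt_sq hρ']


/-- Remez-type inequality (Kleinbock–Tomanov form): for all `d, k ≥ 1` there
is `C > 0` such that for every nonzero polynomial `P` on `ℝ^d` of total
degree at most `k`, every ball `B` and every `ε > 0`,
`Leb{x ∈ B : |P(x)| < ε} ≤ C (ε / sup_B |P|)^{1/(dk)} Leb(B)`. -/
theorem remez_inequality (d k : ℕ) (hd : 0 < d) (hk : 0 < k) :
    ∃ C : ℝ, 0 < C ∧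
      ∀ P : MvPolynomial (Fin d) ℝ, P ≠ 0 → P.totalDegree ≤ k →
        ∀ (x₀ : EuclideanSpace ℝ (Fin d)) (ρ : ℝ), 0 < ρ →
          ∀ ε : ℝ, 0 < ε →
            volume {x : EuclideanSpace ℝ (Fin d) |
                x ∈ Metric.closedBall x₀ ρ ∧
                  |MvPolynomial.eval (fun i => x i) P| < ε} ≤
              ENNReal.ofReal
                  (C * (ε / ⨆ x ∈ Metric.closedBall x₀ ρ,
                      |MvPolynomial.eval (fun i => x i) P|) ^
                    (1 / (d * k : ℝ))) *
                volume (Metric.closedBall x₀ ρ) := by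
  obtain ⟨C₀, hC₀1, hcube⟩ := remez_cube k hk d hd
  have hsd : (0:ℝ) < Real.sqrt d := Real.sqrt_pos.mpr (Nat.cast_pos.mpr hd)
  refine ⟨C₀ * Real.sqrt d ^ d, by positivity, ?_⟩
  intro P hP hdeg x₀ ρ hρ ε hε
  set B := Metric.closedBall x₀ ρ with hBdef
  set f : EuclideanSpace ℝ (Fin d) → ℝ := fun x => |eval (fun i => x i) P| with hfdef
  have hfc : Continuous f := by
    apply continuous_abs.comp
    exact (MvPolynomial.continuous_eval (p := P)).comp
      (continuous_pi fun i => (continuous_apply i).comp (PiLp.continuous_ofLp ..))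
  set M : ℝ := ⨆ x ∈ B, |eval (fun i => x i) P| with hMdef
  have hMf : M = ⨆ x ∈ B, f x := rfl
  -- max point
  obtain ⟨z, hzB, hz⟩ := (isCompact_closedBall x₀ ρ).exists_isMaxOn
    ⟨x₀, Metric.mem_closedBall_self (le_of_lt hρ)⟩ hfc.continuousOn
  have hzmax : ∀ x ∈ B, f x ≤ f z := hz
  have hbdd : BddAbove (Set.range fun x => ⨆ _ : x ∈ B, f x) := by
    refine ⟨max 0 (f z), ?_⟩
    rintro v ⟨x, rfl⟩
    dsimp only
    by_cases hx : x ∈ B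
    · rw [ciSup_pos hx]
      exact le_max_of_le_right (hzmax x hx)
    · haveI : IsEmpty (x ∈ B) := ⟨hx⟩
      rw [Real.iSup_of_isEmpty]
      exact le_max_left _ _
  have hle_M : ∀ x ∈ B, f x ≤ M := by
    intro x hx
    rw [hMf]
    have h1 := le_ciSup hbdd x
    rw [ciSup_pos hx] at h1
    exact h1
  have hM_le_fz : M ≤ f z := by
    rw [hMf]
    refine ciSup_le fun x => ?_
    by_cases hx : x ∈ B
    · rw [ciSup_pos hx]; exact hzmax x hx
    · haveI : IsEmpty (x ∈ B) := ⟨hx⟩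
      rw [Real.iSup_of_isEmpty]
      positivity
  -- M > 0
  set ρ' := ρ / Real.sqrt d with hρ'def
  have hρ' : 0 < ρ' := by positivity
  have hsdρ' : Real.sqrt d * ρ' = ρ := by
    rw [hρ'def]; field_simp
  have hMpos : 0 < M := by
    obtain ⟨y, hy, hyne⟩ := remez_exists_ne_zero d P hP (fun i => x₀ i) ρ' hρ'
    set yE : EuclideanSpace ℝ (Fin d) := WithLp.toLp 2 y with hyE
    have hyEi : ∀ i, yE i = y i := fun i => rfl
    have hyB : yE ∈ B := by
      rw [hBdef, Metric.mem_closedBall]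
      calc dist yE x₀ ≤ Real.sqrt d * ρ' :=
            remez_dist_le yE x₀ ρ' (le_of_lt hρ') fun i => le_of_lt (abs_lt.mpr
              ⟨by linarith [(hy i).1, hyEi i], by linarith [(hy i).2, hyEi i]⟩)
        _ = ρ := hsdρ'
    have : 0 < f yE := abs_pos.mpr hyne
    exact lt_of_lt_of_le this (hle_M yE hyB)
  -- transfer to pi space
  set φ := (MeasurableEquiv.toLp 2 (Fin d → ℝ)).symm with hφdef
  have hmp : MeasurePreserving φ.symm
      (volume : Measure (Fin d → ℝ)) (volume : Measure (EuclideanSpace ℝ (Fin d))) :=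
    (EuclideanSpace.volume_preserving_symm_measurableEquiv_toLp (Fin d)).symm
  set A : Set (EuclideanSpace ℝ (Fin d)) :=
    {x : EuclideanSpace ℝ (Fin d) | x ∈ B ∧ |eval (fun i => x i) P| < ε} with hAdef
  have hAmeas : MeasurableSet A := by
    refine MeasurableSet.inter Metric.isClosed_closedBall.measurableSet ?_
    exact measurableSet_lt hfc.measurable measurable_const
  have htrans : volume A = volume (φ.symm ⁻¹' A) :=
    (hmp.measure_preimage hAmeas.nullMeasurableSet).symm
  set x₀' : Fin d → ℝ := fun i => x₀ i with hx₀'def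
  have hcoords : ∀ (y : Fin d → ℝ) (i : Fin d), (φ.symm y) i = y i := fun y i => rfl
  have hsub : φ.symm ⁻¹' A ⊆
      {y : Fin d → ℝ | y ∈ remezCube d x₀' ρ ∧ |eval y P| < ε} := by
    intro y hy
    obtain ⟨hy1, hy2⟩ := hy
    constructor
    · refine Set.mem_univ_pi.mpr fun i => ?_
      have h1 : |(φ.symm y) i - x₀ i| ≤ ρ :=
        le_trans (remez_coord_le _ _ i) (Metric.mem_closedBall.mp hy1)
      rw [hcoords] at h1
      have h2 := abs_le.mp h1
      exact ⟨by linarith [h2.1], by linarith [h2.2]⟩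
    · exact hy2
  have hwit : ∃ x ∈ remezCube d x₀' ρ, M ≤ |eval x P| := by
    refine ⟨fun i => z i, ?_, ?_⟩
    · refine Set.mem_univ_pi.mpr fun i => ?_
      have h1 : |z i - x₀ i| ≤ ρ :=
        le_trans (remez_coord_le _ _ i) (Metric.mem_closedBall.mp hzB)
      have h2 := abs_le.mp h1
      exact ⟨by linarith [h2.1], by linarith [h2.2]⟩
    · exact hM_le_fz
  have hbound := hcube P hdeg x₀' ρ hρ M ε hMpos hε hwit
  have hQin : remezCube d x₀' ρ' ⊆ φ.symm ⁻¹' B := by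
    intro y hy
    show φ.symm y ∈ B
    rw [hBdef, Metric.mem_closedBall]
    refine le_trans (remez_dist_le _ _ ρ' (le_of_lt hρ') fun i => ?_) (le_of_eq hsdρ')
    rw [hcoords]
    have h2 := Set.mem_univ_pi.mp hy i
    exact abs_le.mpr ⟨by linarith [h2.1], by linarith [h2.2]⟩
  have hvolB : ENNReal.ofReal (2*ρ') ^ d ≤ volume B := by
    have h1 : volume (φ.symm ⁻¹' B) = volume B :=
      hmp.measure_preimage Metric.isClosed_closedBall.measurableSet.nullMeasurableSet
    rw [← h1, ← remezCube_volume d x₀' ρ' (le_of_lt hρ')]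
    exact measure_mono hQin
  have hsplit : ENNReal.ofReal (2*ρ) = ENNReal.ofReal (Real.sqrt d) * ENNReal.ofReal (2*ρ') := by
    rw [← ENNReal.ofReal_mul (le_of_lt hsd)]
    congr 1
    rw [hρ'def]
    field_simp
  calc volume A = volume (φ.symm ⁻¹' A) := htrans
    _ ≤ volume {y : Fin d → ℝ | y ∈ remezCube d x₀' ρ ∧ |eval y P| < ε} :=
        measure_mono hsub
    _ ≤ ENNReal.ofReal (C₀ * (ε/M) ^ ((1:ℝ)/(d*k))) * volume (remezCube d x₀' ρ) := hbound
    _ = (ENNReal.ofReal (C₀ * (ε/M) ^ ((1:ℝ)/(d*k))) * ENNReal.ofReal (Real.sqrt d) ^ d) *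
          ENNReal.ofReal (2*ρ') ^ d := by
        rw [remezCube_volume d x₀' ρ (le_of_lt hρ), hsplit, mul_pow]
        ring
    _ ≤ (ENNReal.ofReal (C₀ * (ε/M) ^ ((1:ℝ)/(d*k))) * ENNReal.ofReal (Real.sqrt d) ^ d) *
          volume B := mul_le_mul_right hvolB _
    _ = ENNReal.ofReal (C₀ * Real.sqrt d ^ d * (ε/M) ^ (1/((d:ℝ)*k))) * volume B := by
        congr 1
        rw [← ENNReal.ofReal_pow (le_of_lt hsd), ← ENNReal.ofReal_mul (by positivity)]
        congr 1
        ring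
end
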